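/- arXiv:math/0312178 — 5 statements merged into one kernel-verified Lean document; each statement's English description precedes it below -/
import Mathlib

section
/- Let p be an odd prime and let a, q, n be nonnegative integers. For each r, the rational number ((r+q)p+n)! / ((r+q)! · p^{r+q}) is an integer, and p^M divides the integer Σ_{r=0}^{a} C(a,r) · ((r+q)p+n)! / ((r+q)! · p^{r+q}), where M = ord_p(n!) if n ≥ ap, and M = a − ⌊n/p⌋ + ord_p(n!) − ⌊(a − ⌊n/p⌋)/p⌋ if n < ap. -/
open Nat Polynomial Finset

namespace Lem321

/-! ### Arithmetic lemmas about `g p A = A - A/p` -/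

def g (p A : ℕ) : ℕ := A - A / p

lemma g_zero (p : ℕ) : g p 0 = 0 := by simp [g]

lemma g_succ_bounds (p : ℕ) (hp : 0 < p) (y : ℕ) :
    g p y ≤ g p (y + 1) ∧ g p (y + 1) ≤ g p y + 1 := by
  have h1 : (y + 1) / p ≤ y / p + 1 := by
    calc (y+1)/p ≤ (y+p)/p := Nat.div_le_div_right (by omega)
    _ = y/p + 1 := Nat.add_div_right _ hp
  have h2 : y / p ≤ (y+1)/p := Nat.div_le_div_right (by omega)
  have h3 : y / p ≤ y := Nat.div_le_self _ _
  have h4 : (y+1)/p ≤ y + 1 := Nat.div_le_self _ _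
  simp only [g]
  omega

lemma g_mono (p : ℕ) (hp : 0 < p) : Monotone (g p) :=
  monotone_nat_of_le_succ (fun y => (g_succ_bounds p hp y).1)

lemma g_sub_le (p : ℕ) (hp : 0 < p) (s y : ℕ) : g p y ≤ s + g p (y - s) := by
  induction s with
  | zero => simp
  | succ s ih =>
    rcases Nat.eq_zero_or_pos (y - s) with h0 | h0
    · have e : y - (s+1) = 0 := by omega
      rw [e]; rw [h0] at ih; omega
    · obtain ⟨w, hw⟩ : ∃ w, y - s = w + 1 := ⟨y - s - 1, by omega⟩
      have e : y - (s+1) = w := by omega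
      rw [e]
      rw [hw] at ih
      have := (g_succ_bounds p hp w).2
      omega

lemma g_p_le (p : ℕ) (hp : 0 < p) (y : ℕ) : g p y ≤ (p - 1) + g p (y - p) := by
  rcases lt_or_ge y p with h | h
  · have h1 : y / p = 0 := Nat.div_eq_of_lt h
    have e : y - p = 0 := by omega
    rw [e, g_zero]
    simp only [g]
    omega
  · have hy : y = (y - p) + p := by omega
    have hdiv : y / p = (y - p)/p + 1 := by
      conv_lhs => rw [hy]
      exact Nat.add_div_right _ hp
    have h3 : (y-p) / p ≤ y - p := Nat.div_le_self _ _
    simp only [g]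
    omega

lemma keyG (p : ℕ) (hp : 2 ≤ p) (y i : ℕ) (hi : i ≤ p - 1) :
    g p y ≤ min (i+1) (p-1) + g p (y - (i+1)) := by
  rcases eq_or_lt_of_le hi with h | h
  · have h1 : i + 1 = p := by omega
    have h2 : min (i+1) (p-1) = p - 1 := by omega
    rw [h2, h1]
    exact g_p_le p (by omega) y
  · have h2 : min (i+1) (p-1) = i + 1 := by omega
    rw [h2]
    exact g_sub_le p (by omega) (i+1) y

/-! ### Polynomial coefficient lemmas -/

variable {R : Type} [CommRing R]

lemma TCdvd (x : R) (Q : R[X]) (j : ℕ) (h : ∀ i, j ≤ i → x ∣ Q.coeff i) :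
    x ∣ (taylor (1:R) Q).coeff j := by
  rw [taylor_coeff, Polynomial.eval_eq_sum_range]
  apply Finset.dvd_sum
  intro i _
  rw [hasseDeriv_coeff]
  exact ((h (i + j) (by omega)).mul_left _).mul_right _

lemma DELTA (x : R) (Q : R[X]) (j : ℕ) (h : ∀ i, j + 1 ≤ i → x ∣ Q.coeff i) :
    x ∣ ((taylor (1:R) Q).coeff j - Q.coeff j) := by
  rw [taylor_coeff, Polynomial.eval_eq_sum_range]
  rw [Finset.sum_range_succ']
  rw [hasseDeriv_coeff]
  simp only [Nat.zero_add, Nat.choose_self, Nat.cast_one, one_mul, pow_zero, mul_one]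
  rw [add_sub_cancel_right]
  apply Finset.dvd_sum
  intro i _
  rw [hasseDeriv_coeff]
  exact ((h (i + 1 + j) (by omega)).mul_left _).mul_right _

lemma PRODLIN {ι : Type} [DecidableEq ι] (s : Finset ι) (b : R) (a : ι → R) (k : ℕ) :
    (∏ i ∈ s, (C b * X + C (a i))).coeff k
      = b ^ k * ∑ S ∈ s.powersetCard k, ∏ i ∈ s \ S, a i := by
  rw [Finset.prod_add, Polynomial.finset_sum_coeff]
  have hterm : ∀ S ∈ s.powerset,
      ((∏ _i ∈ S, (C b * X)) * ∏ i ∈ s \ S, C (a i)).coeff k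
        = if S.card = k then b ^ k * ∏ i ∈ s \ S, a i else 0 := by
    intro S _
    rw [Finset.prod_const, ← map_prod C a]
    have e : (C b * X) ^ S.card * C (∏ i ∈ s \ S, a i)
        = C (b ^ S.card * ∏ i ∈ s \ S, a i) * X ^ S.card := by
      rw [map_mul, C_pow]; ring
    rw [e, Polynomial.coeff_C_mul, Polynomial.coeff_X_pow]
    rcases eq_or_ne S.card k with h | h
    · simp [h]
    · simp [h, Ne.symm h]
  rw [Finset.sum_congr rfl hterm]
  rw [Finset.sum_ite, Finset.sum_const_zero, add_zero]
  rw [Finset.mul_sum]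
  apply Finset.sum_congr
  · rw [powersetCard_eq_filter]
  · intros; rfl

/-! ### The core induction -/

lemma CORE (p : ℕ) (hp : 2 ≤ p) (π : R) (E : R[X])
    (hE : ∀ k, π ^ (min (k+1) (p-1)) ∣ E.coeff k)
    (hEdeg : ∀ k, p ≤ k → E.coeff k = 0)
    (V : ℕ → R) (hV : ∀ m, V (m+1) = V m * (1 + E.eval ((m : R)+1))) :
    ∀ A : ℕ, ∀ q t : ℕ, ∀ U : R[X], (∀ k, π ^ (t - g p (A - k)) ∣ U.coeff k) →
      π ^ t ∣ ∑ s ∈ range (A+1), (-1:R)^s * (A.choose s : R) * (V (s+q) * U.eval ((s+q : ℕ) : R)) := by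
  intro A
  induction A with
  | zero =>
    intro q t U hU
    rw [Finset.sum_range_one]
    simp only [pow_zero, Nat.choose_self, Nat.cast_one, one_mul, Nat.zero_add]
    apply Dvd.dvd.mul_left
    rw [Polynomial.eval_eq_sum_range]
    apply Finset.dvd_sum
    intro i _
    have := hU i
    simp only [Nat.zero_sub, g_zero, Nat.sub_zero] at this
    exact (this.mul_right _)
  | succ A ih =>
    intro q t U hU
    set U' : R[X] := taylor (1:R) U + taylor (1:R) E * taylor (1:R) U - U with hU'def
    have key : ∑ s ∈ range (A+1+1), (-1:R)^s * ((A+1).choose s : R) * (V (s+q) * U.eval ((s+q : ℕ) : R))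
        = -∑ s ∈ range (A+1), (-1:R)^s * (A.choose s : R) * (V (s+q) * U'.eval ((s+q : ℕ) : R)) := by
      have e1 : ∑ s ∈ range (A+1+1), (-1:R)^s * ((A+1).choose s : R) * (V (s+q) * U.eval ((s+q : ℕ) : R))
          = (∑ s ∈ range (A+1), (-1:R)^(s+1) * ((A+1).choose (s+1) : R) * (V (s+1+q) * U.eval ((s+1+q : ℕ) : R)))
            + (-1:R)^0 * ((A+1).choose 0 : R) * (V (0+q) * U.eval ((0+q : ℕ) : R)) :=
        Finset.sum_range_succ' _ _
      have e2 : ∑ s ∈ range (A+1+1), (-1:R)^s * ((A).choose s : R) * (V (s+q) * U.eval ((s+q : ℕ) : R))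
          = (∑ s ∈ range (A+1), (-1:R)^(s+1) * ((A).choose (s+1) : R) * (V (s+1+q) * U.eval ((s+1+q : ℕ) : R)))
            + (-1:R)^0 * ((A).choose 0 : R) * (V (0+q) * U.eval ((0+q : ℕ) : R)) :=
        Finset.sum_range_succ' _ _
      have e3 : ∑ s ∈ range (A+1+1), (-1:R)^s * ((A).choose s : R) * (V (s+q) * U.eval ((s+q : ℕ) : R))
          = (∑ s ∈ range (A+1), (-1:R)^s * ((A).choose s : R) * (V (s+q) * U.eval ((s+q : ℕ) : R)))
            + (-1:R)^(A+1) * ((A).choose (A+1) : R) * (V (A+1+q) * U.eval ((A+1+q : ℕ) : R)) :=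
        Finset.sum_range_succ _ _
      have e4 : ∀ s ∈ range (A+1), (-1:R)^(s+1) * ((A+1).choose (s+1) : R) * (V (s+1+q) * U.eval ((s+1+q : ℕ) : R))
          = (-1:R)^(s+1) * ((A).choose s : R) * (V (s+1+q) * U.eval ((s+1+q : ℕ) : R))
            + (-1:R)^(s+1) * ((A).choose (s+1) : R) * (V (s+1+q) * U.eval ((s+1+q : ℕ) : R)) := by
        intro s _
        rw [Nat.choose_succ_succ]
        push_cast
        ring
      have e5 : ∀ s ∈ range (A+1),
          (-1:R)^(s+1) * ((A).choose s : R) * (V (s+1+q) * U.eval ((s+1+q : ℕ) : R))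
            + (-1:R)^s * ((A).choose s : R) * (V (s+q) * U.eval ((s+q : ℕ) : R))
          = -((-1:R)^s * (A.choose s : R) * (V (s+q) * U'.eval ((s+q : ℕ) : R))) := by
        intro s _
        have hc : ((s+1+q : ℕ) : R) = ((s+q : ℕ) : R) + 1 := by push_cast; ring
        have hv : V (s+1+q) = V (s+q) * (1 + E.eval (((s+q : ℕ) : R)+1)) := by
          have : s+1+q = (s+q)+1 := by omega
          rw [this, hV]
        have hu' : U'.eval ((s+q : ℕ) : R)
            = U.eval (((s+q:ℕ):R)+1) + E.eval (((s+q:ℕ):R)+1) * U.eval (((s+q:ℕ):R)+1) - U.eval ((s+q:ℕ):R) := by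
          simp [hU'def, taylor_eval]
        rw [hc, hv, hu']
        ring
      calc ∑ s ∈ range (A+1+1), (-1:R)^s * ((A+1).choose s : R) * (V (s+q) * U.eval ((s+q : ℕ) : R))
          = (∑ s ∈ range (A+1), ((-1:R)^(s+1) * ((A).choose s : R) * (V (s+1+q) * U.eval ((s+1+q : ℕ) : R))
            + (-1:R)^(s+1) * ((A).choose (s+1) : R) * (V (s+1+q) * U.eval ((s+1+q : ℕ) : R))))
            + (-1:R)^0 * ((A+1).choose 0 : R) * (V (0+q) * U.eval ((0+q : ℕ) : R)) := by
            rw [e1, Finset.sum_congr rfl e4]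
        _ = (∑ s ∈ range (A+1), (-1:R)^(s+1) * ((A).choose s : R) * (V (s+1+q) * U.eval ((s+1+q : ℕ) : R)))
            + ((∑ s ∈ range (A+1), (-1:R)^(s+1) * ((A).choose (s+1) : R) * (V (s+1+q) * U.eval ((s+1+q : ℕ) : R)))
            + (-1:R)^0 * ((A).choose 0 : R) * (V (0+q) * U.eval ((0+q : ℕ) : R))) := by
            rw [Finset.sum_add_distrib]; simp only [Nat.choose_zero_right]; ring
        _ = (∑ s ∈ range (A+1), (-1:R)^(s+1) * ((A).choose s : R) * (V (s+1+q) * U.eval ((s+1+q : ℕ) : R)))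
            + (∑ s ∈ range (A+1), (-1:R)^s * ((A).choose s : R) * (V (s+q) * U.eval ((s+q : ℕ) : R))) := by
            rw [← e2, e3]
            simp [Nat.choose_succ_self]
        _ = ∑ s ∈ range (A+1), ((-1:R)^(s+1) * ((A).choose s : R) * (V (s+1+q) * U.eval ((s+1+q : ℕ) : R))
            + (-1:R)^s * ((A).choose s : R) * (V (s+q) * U.eval ((s+q : ℕ) : R))) := by
            rw [Finset.sum_add_distrib]
        _ = ∑ s ∈ range (A+1), -((-1:R)^s * (A.choose s : R) * (V (s+q) * U'.eval ((s+q : ℕ) : R))) :=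
            Finset.sum_congr rfl e5
        _ = -∑ s ∈ range (A+1), (-1:R)^s * (A.choose s : R) * (V (s+q) * U'.eval ((s+q : ℕ) : R)) := by
            rw [Finset.sum_neg_distrib]
    rw [key, dvd_neg]
    apply ih
    intro k
    have hsplit : U'.coeff k = ((taylor (1:R) U).coeff k - U.coeff k) + (taylor (1:R) E * taylor (1:R) U).coeff k := by
      simp only [hU'def, coeff_add, coeff_sub]; ring
    rw [hsplit]
    apply dvd_add
    · apply DELTA
      intro i hi
      refine dvd_trans (pow_dvd_pow π ?_) (hU i)
      have := g_mono p (by omega) (show A+1-i ≤ A-k by omega)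
      omega
    · rw [coeff_mul]
      apply Finset.dvd_sum
      rintro ⟨j1, j2⟩ hmem
      rw [Finset.HasAntidiagonal.mem_antidiagonal] at hmem
      rcases le_or_gt j1 (p-1) with hj1 | hj1
      · have c1 : π ^ (min (j1+1) (p-1)) ∣ (taylor (1:R) E).coeff j1 := by
          apply TCdvd
          intro i hi
          exact dvd_trans (pow_dvd_pow π (by omega : min (j1+1) (p-1) ≤ min (i+1) (p-1))) (hE i)
        have c2 : π ^ (t - g p (A+1-j2)) ∣ (taylor (1:R) U).coeff j2 := by
          apply TCdvd
          intro i hi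
          refine dvd_trans (pow_dvd_pow π ?_) (hU i)
          have := g_mono p (by omega) (show A+1-i ≤ A+1-j2 by omega)
          omega
        have c3 := mul_dvd_mul c1 c2
        rw [← pow_add] at c3
        refine dvd_trans (pow_dvd_pow π ?_) c3
        have hkey := keyG p hp (A+1-j2) j1 hj1
        have heq : (A+1-j2) - (j1+1) = A - k := by omega
        rw [heq] at hkey
        omega
      · have c1 : (taylor (1:R) E).coeff j1 = 0 := by
          have h0 : (0:R) ∣ (taylor (1:R) E).coeff j1 := by
            apply TCdvd
            intro i hi
            rw [hEdeg i (by omega)]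
          exact zero_dvd_iff.mp h0
        rw [c1, zero_mul]
        exact dvd_zero _

/-! ### Finite field facts -/

lemma prod_univ_X_sub_C (p : ℕ) [Fact p.Prime] :
    ∏ u ∈ (univ : Finset (ZMod p)), (X - C u) = X ^ p - X := by
  have hmonic : (X ^ p - X : (ZMod p)[X]).Monic := by
    apply Polynomial.monic_X_pow_sub
    calc (X : (ZMod p)[X]).degree = 1 := Polynomial.degree_X
    _ < (p : WithBot ℕ) := by
      have := (Fact.out : p.Prime).two_le
      exact WithBot.coe_lt_coe.mpr (by omega : 1 < p)
  have hcard : Multiset.card (X ^ p - X : (ZMod p)[X]).roots = (X ^ p - X : (ZMod p)[X]).natDegree := by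
    rw [show (X ^ p - X : (ZMod p)[X]) = X ^ (Fintype.card (ZMod p)) - X by rw [ZMod.card]]
    rw [FiniteField.roots_X_pow_card_sub_X, FiniteField.X_pow_card_sub_X_natDegree_eq]
    · simp [ZMod.card]
    · rw [ZMod.card]; exact (Fact.out : p.Prime).one_lt
  have h := Polynomial.prod_multiset_X_sub_C_of_monic_of_roots_card_eq hmonic hcard
  rw [show (X ^ p - X : (ZMod p)[X]) = X ^ (Fintype.card (ZMod p)) - X by rw [ZMod.card]] at h ⊢
  rw [FiniteField.roots_X_pow_card_sub_X] at h
  rw [← h, Finset.prod_eq_multiset_prod]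

lemma prod_erase_X_sub_C (p : ℕ) [Fact p.Prime] :
    ∏ u ∈ (univ : Finset (ZMod p)).erase 0, (X - C u) = X ^ (p-1) - 1 := by
  have h0 := Finset.mul_prod_erase (univ : Finset (ZMod p))
    (fun u => (X : (ZMod p)[X]) - C u) (mem_univ (0:ZMod p))
  rw [prod_univ_X_sub_C] at h0
  have hp2 := (Fact.out : p.Prime).two_le
  have h1 : (X : (ZMod p)[X]) ^ (p-1) * X = X^p := by
    rw [← pow_succ]
    congr 1
    omega
  have hXX : (X ^ p - X : (ZMod p)[X]) = X * (X ^ (p-1) - 1) := by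
    rw [← h1]; ring
  rw [hXX] at h0
  simp only [map_zero, sub_zero] at h0
  exact mul_left_cancel₀ Polynomial.X_ne_zero h0

lemma prod_erase_X_add_C (p : ℕ) [Fact p.Prime] :
    ∏ u ∈ (univ : Finset (ZMod p)).erase 0, (X + C u) = X ^ (p-1) - 1 := by
  rw [← prod_erase_X_sub_C p]
  apply Finset.prod_bij' (fun (u : ZMod p) _ => -u) (fun u _ => -u) <;>
    intro u hu <;> simp_all [Finset.mem_erase, sub_eq_add_neg]

/-! ### The combinatorial set-up -/

def T (p n : ℕ) : Finset ℕ := (Icc 1 p).erase (p - n % p)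
def Pn (p n : ℕ) (j : ℕ) : ℕ := ∏ t ∈ T p n, ((j-1)*p + n + t)
def Wn (p n : ℕ) (m : ℕ) : ℕ := ∏ j ∈ range m, Pn p n (j+1)

lemma cardT (p n : ℕ) [Fact p.Prime] : (T p n).card = p - 1 := by
  have hp2 := (Fact.out : p.Prime).two_le
  have hd : n % p < p := Nat.mod_lt _ (by omega)
  rw [T, Finset.card_erase_of_mem, Nat.card_Icc]
  · omega
  · rw [Finset.mem_Icc]; omega

lemma phi_inj (p n : ℕ) [Fact p.Prime] : ∀ t1 ∈ T p n, ∀ t2 ∈ T p n,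
    ((n % p + t1 : ℕ) : ZMod p) = ((n % p + t2 : ℕ) : ZMod p) → t1 = t2 := by
  have hp2 := (Fact.out : p.Prime).two_le
  have hd : n % p < p := Nat.mod_lt _ (by omega)
  intro t1 h1 t2 h2 heq
  rw [T, Finset.mem_erase, Finset.mem_Icc] at h1 h2
  rw [ZMod.natCast_eq_natCast_iff] at heq
  have heq' : t1 ≡ t2 [MOD p] := Nat.ModEq.add_left_cancel' _ heq
  rcases le_total t1 t2 with hle | hle
  · have hdvd := (Nat.modEq_iff_dvd' hle).mp heq'
    have := Nat.eq_zero_of_dvd_of_lt hdvd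
    omega
  · have hdvd := (Nat.modEq_iff_dvd' hle).mp heq'.symm
    have := Nat.eq_zero_of_dvd_of_lt hdvd
    omega

lemma phi_img (p n : ℕ) [Fact p.Prime] :
    (T p n).image (fun t => ((n % p + t : ℕ) : ZMod p)) = (univ : Finset (ZMod p)).erase 0 := by
  have hp2 := (Fact.out : p.Prime).two_le
  have hd : n % p < p := Nat.mod_lt _ (by omega)
  have hinj := phi_inj p n
  apply Finset.eq_of_subset_of_card_le
  · intro u hu
    rw [Finset.mem_image] at hu
    obtain ⟨t, ht, rfl⟩ := hu
    rw [Finset.mem_erase]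
    refine ⟨?_, mem_univ _⟩
    rw [T, Finset.mem_erase, Finset.mem_Icc] at ht
    intro h0
    rw [ZMod.natCast_eq_zero_iff] at h0
    obtain ⟨k, hk⟩ := h0
    have h2 : p * k < p * 2 := by omega
    have hk2 : k < 2 := Nat.lt_of_mul_lt_mul_left h2
    have hk0 : 0 < k := by
      rcases Nat.eq_zero_or_pos k with h | h
      · subst h; omega
      · exact h
    have : k = 1 := by omega
    subst this
    omega
  · rw [Finset.card_erase_of_mem (mem_univ _),
      Finset.card_image_of_injOn (fun x hx y hy h => hinj x hx y hy h),
      cardT, Finset.card_univ, ZMod.card]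

lemma Phi_eq (p n : ℕ) [Fact p.Prime] :
    ∏ t ∈ T p n, (X + C ((n % p + t : ℕ) : ZMod p)) = X ^ (p-1) - 1 := by
  rw [← prod_erase_X_add_C p, ← phi_img p n]
  rw [Finset.prod_image]
  intro x hx y hy h
  exact phi_inj p n x hx y hy h

lemma esymm_dvd (p n : ℕ) [Fact p.Prime] (k : ℕ) (hk : 1 ≤ k) (hk2 : k ≤ p - 2) :
    (p:ℤ) ∣ ∑ S ∈ (T p n).powersetCard k, ∏ t ∈ (T p n) \ S, ((n : ℤ) + t - p) := by
  have hp2 := (Fact.out : p.Prime).two_le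
  rw [← ZMod.intCast_zmod_eq_zero_iff_dvd]
  push_cast
  have hcast : ∀ S ∈ (T p n).powersetCard k,
      (∏ t ∈ (T p n) \ S, ((n : ZMod p) + (t:ZMod p) - (p : ZMod p)))
        = ∏ t ∈ (T p n) \ S, ((n % p + t : ℕ) : ZMod p) := by
    intro S _
    apply Finset.prod_congr rfl
    intro t _
    push_cast
    rw [ZMod.natCast_self, sub_zero]
    congr 1
    rw [ZMod.natCast_mod]
  rw [Finset.sum_congr rfl hcast]
  have := PRODLIN (T p n) (1 : ZMod p) (fun t => ((n % p + t : ℕ) : ZMod p)) k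
  rw [one_pow, one_mul] at this
  simp only [map_one, one_mul] at this
  rw [← this, Phi_eq]
  rw [Polynomial.coeff_sub, Polynomial.coeff_X_pow, Polynomial.coeff_one]
  have h1 : k ≠ p - 1 := by omega
  have h2 : k ≠ 0 := by omega
  simp [h1, h2]

lemma const_dvd (p n : ℕ) [Fact p.Prime] :
    (p:ℤ) ∣ (∏ t ∈ (T p n), ((n : ℤ) + t - p)) + 1 := by
  have hp2 := (Fact.out : p.Prime).two_le
  rw [← ZMod.intCast_zmod_eq_zero_iff_dvd]
  push_cast
  have hcast : (∏ t ∈ (T p n), ((n : ZMod p) + (t:ZMod p) - (p : ZMod p)))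
        = ∏ t ∈ (T p n), ((n % p + t : ℕ) : ZMod p) := by
    apply Finset.prod_congr rfl
    intro t _
    push_cast
    rw [ZMod.natCast_self, sub_zero]
    congr 1
    rw [ZMod.natCast_mod]
  rw [hcast]
  have := PRODLIN (T p n) (1 : ZMod p) (fun t => ((n % p + t : ℕ) : ZMod p)) 0
  rw [one_pow, one_mul, Finset.powersetCard_zero, Finset.sum_singleton, Finset.sdiff_empty] at this
  simp only [map_one, one_mul] at this
  rw [← this, Phi_eq]
  rw [Polynomial.coeff_sub, Polynomial.coeff_X_pow, Polynomial.coeff_one]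
  have h1 : ¬((0:ℕ) = p - 1) := by omega
  simp [h1]

/-! ### The factorial identity -/

lemma fact_add (N k : ℕ) : (N + k)! = N ! * ∏ t ∈ Icc 1 k, (N + t) := by
  induction k with
  | zero => simp
  | succ k ih =>
    rw [show N + (k+1) = (N+k)+1 by omega, factorial_succ, ih,
      Finset.prod_Icc_succ_top (by omega : 1 ≤ k+1)]
    rw [show N + (k+1) = N+k+1 by omega]
    ring

lemma NCC (m c : ℕ) : (m+1) * ((m+1+c).choose c) = (m+c+1) * ((m+c).choose c) := by
  have h1 := Nat.add_one_mul_choose_eq (m+c) m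
  have h2 : (m+c).choose m = (m+c).choose c := by
    rw [← Nat.choose_symm (show c ≤ m+c by omega)]
    congr 1
    omega
  have h3 : (m+1+c).choose c = (m+1+c).choose (m+1) := by
    rw [← Nat.choose_symm (show m+1 ≤ m+1+c by omega)]
    congr 1
    omega
  rw [h2] at h1
  rw [h3, show m+1+c = m+c+1 by omega, mul_comm]
  exact h1.symm

lemma ident (p n : ℕ) (hp : p.Prime) :
    ∀ m : ℕ, (m*p + n)! = n ! * ((m + n/p).choose (n/p)) * Wn p n m * (m ! * p^m) := by
  intro m
  induction m with
  | zero => simp [Wn]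
  | succ m ih =>
    set c := n / p with hc
    set d := n % p with hd
    have hp1 : 0 < p := hp.pos
    have hdp : d < p := Nat.mod_lt _ hp1
    have hnd : n = c * p + d := by
      have h := Nat.div_add_mod n p
      have h2 : p * (n/p) = (n/p) * p := mul_comm _ _
      rw [hc, hd]; omega
    have hfa : ((m+1)*p + n)! = (m*p+n)! * ∏ t ∈ Icc 1 p, (m*p+n + t) := by
      rw [show (m+1)*p + n = (m*p+n) + p by ring]
      exact fact_add _ _
    have hmem : p - d ∈ Icc 1 p := by
      rw [Finset.mem_Icc]; omega
    have hsplit : ∏ t ∈ Icc 1 p, (m*p+n + t)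
        = (m*p+n + (p - d)) * ∏ t ∈ T p n, (m*p+n + t) := by
      rw [← Finset.mul_prod_erase _ _ hmem]
      rfl
    have hmult : m*p+n + (p - d) = (m+c+1) * p := by
      have : (m+c+1)*p = m*p + c*p + p := by ring
      omega
    have hPn : ∏ t ∈ T p n, (m*p+n + t) = Pn p n (m+1) := by
      unfold Pn
      apply Finset.prod_congr rfl
      intro t _
      simp
    have hW : Wn p n (m+1) = Wn p n m * Pn p n (m+1) := Finset.prod_range_succ _ _
    have hNCC := NCC m c
    rw [hfa, hsplit, hmult, hPn, ih, hW, factorial_succ, pow_succ]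
    rw [show m+1+c = m+c+1 by omega] at *
    zify at hNCC ⊢
    linear_combination (-(n ! : ℤ) * Wn p n m * Pn p n (m+1) * m ! * p^m * p) * hNCC

/-! ### The main divisibility lemma -/

lemma MAIN (p n : ℕ) (hp : p.Prime) (A q : ℕ) :
    p ^ (g p A) ∣ ∑ s ∈ range (A+1), (A.choose s) * Wn p n (s+q) := by
  haveI : Fact p.Prime := ⟨hp⟩
  have hp2 := hp.two_le
  haveI : NeZero (p ^ g p A) := ⟨pow_ne_zero _ hp.pos.ne'⟩
  rw [← ZMod.natCast_eq_zero_iff]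
  set R := ZMod (p ^ g p A) with hR
  letI : CommRing R := ZMod.commRing _
  set EE : R[X] := -(∏ t ∈ T p n, (C (p:R) * X + C ((n:R) + (t:R) - (p:R)))) - 1 with hEE
  set VV : ℕ → R := fun m => ∏ j ∈ range m, (-((Pn p n (j+1) : ℕ) : R)) with hVV
  have hPncast : ∀ m : ℕ, ((Pn p n (m+1) : ℕ) : R)
      = ∏ t ∈ T p n, ((p:R) * ((m:R)+1) + ((n:R) + (t:R) - (p:R))) := by
    intro m
    rw [Pn, Nat.cast_prod]
    apply Finset.prod_congr rfl
    intro t _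
    have he : (m+1-1) = m := rfl
    rw [he]
    push_cast
    ring
  have hV : ∀ m, VV (m+1) = VV m * (1 + EE.eval ((m : R)+1)) := by
    intro m
    rw [hVV]
    simp only
    rw [Finset.prod_range_succ]
    congr 1
    rw [hEE]
    simp only [eval_sub, eval_neg, eval_one, eval_prod, eval_add, eval_mul, eval_C, eval_X]
    rw [hPncast m]
    ring
  have hcoeffP : ∀ k, (∏ t ∈ T p n, (C (p:R) * X + C ((n:R) + (t:R) - (p:R)))).coeff k
      = (p:R)^k * ∑ S ∈ (T p n).powersetCard k, ∏ t ∈ (T p n) \ S, ((n:R) + (t:R) - (p:R)) :=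
    fun k => PRODLIN _ _ _ k
  have hsumcast : ∀ k, (∑ S ∈ (T p n).powersetCard k, ∏ t ∈ (T p n) \ S, ((n:R) + (t:R) - (p:R)))
      = (((∑ S ∈ (T p n).powersetCard k, ∏ t ∈ (T p n) \ S, ((n:ℤ) + (t:ℤ) - (p:ℤ))) : ℤ) : R) := by
    intro k; push_cast; rfl
  have hcoeffE : ∀ k, EE.coeff k
      = -((∏ t ∈ T p n, (C (p:R) * X + C ((n:R) + (t:R) - (p:R)))).coeff k) - (1:R[X]).coeff k := by
    intro k
    rw [hEE]
    simp [coeff_sub, coeff_neg]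
  have hE : ∀ k, (p:R) ^ (min (k+1) (p-1)) ∣ EE.coeff k := by
    intro k
    rcases Nat.eq_zero_or_pos k with rfl | hk
    · rw [hcoeffE, hcoeffP, hsumcast, Polynomial.coeff_one]
      simp only [pow_zero, one_mul, if_pos rfl]
      have hmin : min (0+1) (p-1) = 1 := by omega
      rw [hmin, pow_one]
      rw [Finset.powersetCard_zero, Finset.sum_singleton, Finset.sdiff_empty]
      obtain ⟨y, hy⟩ := const_dvd p n
      have he : (∏ t ∈ T p n, ((n:ℤ) + t - p)) = p * y - 1 := by omega
      rw [he]
      exact ⟨-(y:R), by push_cast; ring⟩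
    · rw [hcoeffE, Polynomial.coeff_one, if_neg (by omega : ¬ k = 0), sub_zero, hcoeffP, hsumcast]
      rcases le_or_gt (p-1) k with hk2 | hk2
      · have hmin : min (k+1) (p-1) = p-1 := by omega
        rw [hmin, dvd_neg]
        exact ((pow_dvd_pow (p:R) (by omega : p-1 ≤ k)).mul_right _)
      · have hmin : min (k+1) (p-1) = k+1 := by omega
        rw [hmin]
        obtain ⟨y, hy⟩ := esymm_dvd p n k hk (by omega)
        rw [hy]
        exact ⟨-(y:R), by push_cast; ring⟩
  have hEdeg : ∀ k, p ≤ k → EE.coeff k = 0 := by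
    intro k hk
    rw [hcoeffE, Polynomial.coeff_one, if_neg (by omega : ¬ k = 0), sub_zero, hcoeffP]
    rw [Finset.powersetCard_eq_empty.mpr (by rw [cardT]; omega), Finset.sum_empty, mul_zero, neg_zero]
  have hVWn : ∀ m, ((Wn p n m : ℕ) : R) = (-1)^m * VV m := by
    intro m
    have h1 : VV m = (-1:R)^m * ((Wn p n m : ℕ) : R) := by
      rw [hVV, Wn, Nat.cast_prod]
      simp only
      calc ∏ j ∈ range m, (-((Pn p n (j+1) : ℕ) : R))
          = ∏ j ∈ range m, ((-1:R) * ((Pn p n (j+1) : ℕ) : R)) := by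
            apply Finset.prod_congr rfl; intros; ring
        _ = (∏ _j ∈ range m, (-1:R)) * ∏ j ∈ range m, ((Pn p n (j+1) : ℕ) : R) :=
            Finset.prod_mul_distrib
        _ = (-1:R)^m * ∏ j ∈ range m, ((Pn p n (j+1) : ℕ) : R) := by
            rw [Finset.prod_const, Finset.card_range]
    rw [h1, ← mul_assoc]
    have : (-1:R)^m * (-1:R)^m = 1 := by
      rw [← pow_add, ← two_mul, pow_mul]
      norm_num
    rw [this, one_mul]
  have hone : ∀ k, (p:R) ^ (g p A - g p (A - k)) ∣ (1:R[X]).coeff k := by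
    intro k
    rcases Nat.eq_zero_or_pos k with rfl | hk
    · rw [Polynomial.coeff_one, if_pos rfl, Nat.sub_zero, Nat.sub_self, pow_zero]
    · rw [Polynomial.coeff_one, if_neg (by omega : ¬ k = 0)]
      exact dvd_zero _
  have hdvd := CORE p hp2 (p:R) EE hE hEdeg VV hV A q (g p A) 1 hone
  have hzero : (p:R) ^ (g p A) = 0 := by
    rw [← Nat.cast_pow]
    exact ZMod.natCast_self (p ^ g p A)
  rw [hzero, zero_dvd_iff] at hdvd
  have hcast : ((∑ s ∈ range (A+1), (A.choose s) * Wn p n (s+q) : ℕ) : R)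
      = (-1)^q * ∑ s ∈ range (A+1), (-1:R)^s * (A.choose s : R) * (VV (s+q) * (1:R[X]).eval ((s+q:ℕ):R)) := by
    push_cast
    rw [Finset.mul_sum]
    apply Finset.sum_congr rfl
    intro s _
    rw [hVWn (s+q)]
    simp only [eval_one, mul_one]
    rw [pow_add]
    ring
  exact hcast.trans (by rw [hdvd, mul_zero])


/-! ### Reduction to MAIN -/

lemma choose_trinom (a i s : ℕ) : a.choose (i+s) * (i+s).choose i = a.choose i * (a-i).choose s := by
  rcases le_or_gt (i+s) a with h | h
  · have e1 := Nat.choose_mul_factorial_mul_factorial (show i+s ≤ a from h)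
    have e2 := Nat.choose_mul_factorial_mul_factorial (show i ≤ i+s by omega)
    have e3 := Nat.choose_mul_factorial_mul_factorial (show i ≤ a by omega)
    have e4 := Nat.choose_mul_factorial_mul_factorial (show s ≤ a - i by omega)
    rw [show a - (i+s) = a-i-s by omega] at e1
    rw [show i+s-i = s by omega] at e2
    rw [show a-i-s = a-i-s by omega] at e4
    apply Nat.eq_of_mul_eq_mul_right
      (show 0 < i ! * s ! * (a-i-s)! from
        Nat.mul_pos (Nat.mul_pos (factorial_pos _) (factorial_pos _)) (factorial_pos _))
    zify at e1 e2 e3 e4 ⊢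
    linear_combination ((a-i-s)! : ℤ) * (a.choose (i+s) : ℤ) * e2 + e1
      - ((a.choose i : ℤ) * (i ! : ℤ)) * e4 - e3
  · rcases le_or_gt i a with hia | hia
    · rw [Nat.choose_eq_zero_of_lt h, zero_mul,
        Nat.choose_eq_zero_of_lt (show a - i < s by omega), mul_zero]
    · rw [Nat.choose_eq_zero_of_lt h, zero_mul, Nat.choose_eq_zero_of_lt hia, zero_mul]

lemma REDUC (p n : ℕ) (hp : p.Prime) (a q c : ℕ) :
    p ^ (g p (a - c)) ∣ ∑ r ∈ range (a+1), a.choose r * ((r+q+c).choose c * Wn p n (r+q)) := by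
  have hvan : ∀ r : ℕ, (r+q+c).choose c
      = ∑ ij ∈ antidiagonal c, r.choose ij.1 * (q+c).choose ij.2 := by
    intro r
    rw [show r+q+c = r + (q+c) by ring]
    exact Nat.add_choose_eq r (q+c) c
  have h1 : ∑ r ∈ range (a+1), a.choose r * ((r+q+c).choose c * Wn p n (r+q))
      = ∑ ij ∈ antidiagonal c, ∑ r ∈ range (a+1),
          (q+c).choose ij.2 * (a.choose r * r.choose ij.1 * Wn p n (r+q)) := by
    rw [Finset.sum_comm]
    apply Finset.sum_congr rfl
    intro r _
    rw [hvan r, Finset.sum_mul, Finset.mul_sum]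
    apply Finset.sum_congr rfl
    intro ij _
    ring
  rw [h1]
  apply Finset.dvd_sum
  rintro ⟨i, j⟩ hij
  rw [Finset.HasAntidiagonal.mem_antidiagonal] at hij
  simp only at hij ⊢
  have hi_le : i ≤ c := by omega
  have hsum : ∑ r ∈ range (a+1), (q+c).choose j * (a.choose r * r.choose i * Wn p n (r+q))
      = (q+c).choose j * a.choose i
          * ∑ s ∈ range (a-i+1), (a-i).choose s * Wn p n (s+(i+q)) := by
    rcases le_or_gt i a with hia | hia
    · have hz : ∑ r ∈ Ico 0 i, (q+c).choose j * (a.choose r * r.choose i * Wn p n (r+q)) = 0 := by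
        apply Finset.sum_eq_zero
        intro r hr
        rw [Finset.mem_Ico] at hr
        rw [Nat.choose_eq_zero_of_lt hr.2, mul_zero, zero_mul, mul_zero]
      have hL : ∑ r ∈ range (a+1), (q+c).choose j * (a.choose r * r.choose i * Wn p n (r+q))
          = ∑ s ∈ range ((a-i)+1), (q+c).choose j * (a.choose (i+s) * (i+s).choose i * Wn p n (i+s+q)) := by
        calc ∑ r ∈ range (a+1), (q+c).choose j * (a.choose r * r.choose i * Wn p n (r+q))
            = ∑ r ∈ Ico 0 (a+1), (q+c).choose j * (a.choose r * r.choose i * Wn p n (r+q)) := by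
              rw [Finset.range_eq_Ico]
          _ = (∑ r ∈ Ico 0 i, (q+c).choose j * (a.choose r * r.choose i * Wn p n (r+q)))
              + ∑ r ∈ Ico i (a+1), (q+c).choose j * (a.choose r * r.choose i * Wn p n (r+q)) :=
              (Finset.sum_Ico_consecutive _ (by omega) (by omega)).symm
          _ = ∑ r ∈ Ico i (a+1), (q+c).choose j * (a.choose r * r.choose i * Wn p n (r+q)) := by
              rw [hz, zero_add]
          _ = ∑ s ∈ range (a+1-i), (q+c).choose j * (a.choose (i+s) * (i+s).choose i * Wn p n (i+s+q)) :=
              Finset.sum_Ico_eq_sum_range _ _ _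
          _ = ∑ s ∈ range ((a-i)+1), (q+c).choose j * (a.choose (i+s) * (i+s).choose i * Wn p n (i+s+q)) := by
              rw [show a+1-i = (a-i)+1 by omega]
      rw [hL, Finset.mul_sum]
      apply Finset.sum_congr rfl
      intro s _
      rw [choose_trinom a i s, show i + s + q = s + (i+q) by ring]
      ring
    · -- i > a : both sides vanish
      have hz1 : ∑ r ∈ range (a+1), (q+c).choose j * (a.choose r * r.choose i * Wn p n (r+q)) = 0 := by
        apply Finset.sum_eq_zero
        intro r hr
        rw [Finset.mem_range] at hr
        rw [Nat.choose_eq_zero_of_lt (by omega : r < i), mul_zero, zero_mul, mul_zero]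
      rw [hz1, Nat.choose_eq_zero_of_lt hia, mul_zero, zero_mul]
  rw [hsum]
  have hmain := MAIN p n hp (a-i) (i+q)
  have hmono : g p (a-c) ≤ g p (a-i) := g_mono p hp.pos (by omega)
  exact Dvd.dvd.mul_left (dvd_trans (pow_dvd_pow _ hmono) hmain) _

end Lem321

open Lem321 in
/-- Lemma 3.2.1 -/
theorem lemma_3_2_1 (p : ℕ) (hp : p.Prime) (hodd : p ≠ 2) (a q n : ℕ) :
    (∀ r : ℕ, (r + q)! * p ^ (r + q) ∣ ((r + q) * p + n)!) ∧
    p ^ (if a * p ≤ n then padicValNat p (n !)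
          else a - n / p + padicValNat p (n !) - (a - n / p) / p)
      ∣ ∑ r ∈ Finset.range (a + 1),
          a.choose r * (((r + q) * p + n)! / ((r + q)! * p ^ (r + q))) := by
  have hp2 := hp.two_le
  constructor
  · intro r
    exact ⟨n ! * ((r + q + n/p).choose (n/p)) * Wn p n (r+q), by
      rw [ident p n hp (r+q)]; ring⟩
  · have hdiveq : ∀ r : ℕ, ((r+q)*p + n)! / ((r+q)! * p^(r+q))
        = n ! * ((r+q+n/p).choose (n/p) * Wn p n (r+q)) := by
      intro r
      have hpos : 0 < (r+q)! * p^(r+q) := Nat.mul_pos (factorial_pos _) (pow_pos hp.pos _)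
      rw [ident p n hp (r+q), Nat.mul_div_cancel _ hpos, mul_assoc]
    have hsum : ∑ r ∈ Finset.range (a+1), a.choose r * (((r+q)*p+n)! / ((r+q)! * p^(r+q)))
        = n ! * ∑ r ∈ Finset.range (a+1), a.choose r * ((r+q+n/p).choose (n/p) * Wn p n (r+q)) := by
      rw [Finset.mul_sum]
      apply Finset.sum_congr rfl
      intro r _
      rw [hdiveq r]
      ring
    rw [hsum]
    by_cases hcase : a * p ≤ n
    · rw [if_pos hcase]
      exact Dvd.dvd.mul_right pow_padicValNat_dvd _
    · rw [if_neg hcase]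
      push_neg at hcase
      have hca : n / p < a := Nat.div_lt_of_lt_mul (by rwa [mul_comm] at hcase)
      have hM : a - n/p + padicValNat p (n !) - (a - n/p)/p
          = padicValNat p (n !) + g p (a - n/p) := by
        have h1 : (a - n/p)/p ≤ a - n/p := Nat.div_le_self _ _
        simp only [g]
        omega
      rw [hM, pow_add]
      exact mul_dvd_mul pow_padicValNat_dvd (REDUC p n hp a q (n/p))
end

section
/- Let p ≥ 7 be a prime and let U be the partition with U_1 = p, U_{2p−1} = (p−5)/2, and U_j = 0 for all other j. Then w(U) = p + (2p−1)(p−5)/2, d(U) = p + (p−5)/2, and the p-adic valuation of τ_U equals (p−5)/2, which moreover equals ⌊(w(U) + d(U) − 2)/(2p)⌋. In particular the lower bound ord_p(τ_U) ≥ ⌊(w(U)+d(U)−2)/(2p)⌋ is attained with equality for this partition. -/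
open Nat MvPolynomial

noncomputable section

/-- weight of a partition given as multiplicity function -/
def pWeight (U : ℕ →₀ ℕ) : ℕ := U.sum fun j m => j * m

/-- degree of a partition -/
def pDegree (U : ℕ →₀ ℕ) : ℕ := U.sum fun _ m => m

/-- γ_U = ∏_j (j+1)^{U j} (U j)! -/
def pGamma (U : ℕ →₀ ℕ) : ℕ := U.prod fun j m => (j + 1) ^ m * m !

/-- τ_U = (-1)^{d(U)-1} (w(U)+d(U)-2)! / γ_U -/
def pTau (U : ℕ →₀ ℕ) : ℚ :=
  (-1) ^ (pDegree U - 1) * ((pWeight U + pDegree U - 2)! : ℚ) / (pGamma U : ℚ)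

/-- Q n = B̂_n / n, the Schur function expression of the universal Bernoulli numbers -/
def Q (n : ℕ) : MvPolynomial ℕ ℚ :=
  ∑ᶠ U ∈ {U : ℕ →₀ ℕ | U 0 = 0 ∧ pWeight U = n}, monomial U (pTau U)

/-- A polynomial over ℚ is ≡ 0 mod p^M iff every nonzero coefficient has
p-adic valuation at least M. -/
def CongZeroModPpow (p : ℕ) (M : ℕ) (P : MvPolynomial ℕ ℚ) : Prop :=
  ∀ m : ℕ →₀ ℕ, P.coeff m ≠ 0 → (M : ℤ) ≤ padicValRat p (P.coeff m)

lemma padicValRat_neg_one_pow_mul (p e : ℕ) (x : ℚ) :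
    padicValRat p ((-1 : ℚ) ^ e * x) = padicValRat p x := by
  rcases Nat.even_or_odd e with he | he
  · rw [he.neg_one_pow, one_mul]
  · rw [he.neg_one_pow, neg_one_mul, padicValRat.neg]

/-- Remark 3.1.2(2)/3.3.2: for a prime p ≥ 7 and the partition U with U_1 = p,
U_{2p-1} = (p-5)/2 and U_j = 0 otherwise, one has w(U) = p + (2p-1)(p-5)/2,
d(U) = p + (p-5)/2, ord_p(τ_U) = (p-5)/2 = ⌊(w(U)+d(U)-2)/(2p)⌋, so the bound of
Lemma 3.3.1 is attained with equality. -/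
theorem best_possible (p : ℕ) (hp : p.Prime) (h7 : 7 ≤ p)
    (U : ℕ →₀ ℕ) (hU : U = Finsupp.single 1 p + Finsupp.single (2 * p - 1) ((p - 5) / 2)) :
    pWeight U = p + (2 * p - 1) * ((p - 5) / 2) ∧
    pDegree U = p + (p - 5) / 2 ∧
    padicValRat p (pTau U) = ((p - 5) / 2 : ℕ) ∧
    (p - 5) / 2 = (pWeight U + pDegree U - 2) / (2 * p) := by
  haveI : Fact p.Prime := ⟨hp⟩
  have hodd : p % 2 = 1 := Nat.odd_iff.1 (hp.odd_of_ne_two (by omega))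
  set k : ℕ := (p - 5) / 2 with hk
  have hpk : p = 2 * k + 5 := by omega
  set m : ℕ := 2 * p - 1 with hm
  have hm1 : m ≠ 1 := by omega
  have hknz : k ≠ 0 := by omega
  -- weight
  have hw : pWeight U = p + m * k := by
    rw [hU, pWeight, Finsupp.sum_add_index' (fun a => mul_zero a) (fun a b c => mul_add a b c),
      Finsupp.sum_single_index (mul_zero _), Finsupp.sum_single_index (mul_zero _), one_mul]
  -- degree
  have hd : pDegree U = p + k := by
    rw [hU, pDegree, Finsupp.sum_add_index' (fun _ => rfl) (fun _ _ _ => rfl),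
      Finsupp.sum_single_index rfl, Finsupp.sum_single_index rfl]
  -- values
  have hU1 : U 1 = p := by
    rw [hU]; simp [Finsupp.single_apply, hm1.symm]
  have hUm : U m = k := by
    rw [hU]; simp [Finsupp.single_apply, hm1]
  -- gamma
  have hγ : pGamma U = (2 ^ p * p !) * ((2 * p) ^ k * k !) := by
    have hsub : U.support ⊆ {1, m} := by
      rw [hU]
      refine Finsupp.support_add.trans ?_
      apply Finset.union_subset
      · exact Finsupp.support_single_subset.trans (by simp)
      · exact Finsupp.support_single_subset.trans (by simp)
    rw [pGamma, Finsupp.prod_of_support_subset U hsub _ (fun i _ => by simp)]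
    rw [Finset.prod_pair (Ne.symm hm1), hU1, hUm]
    have : m + 1 = 2 * p := by omega
    rw [this]
  -- N
  set N : ℕ := pWeight U + pDegree U - 2 with hN
  have hNval : N = 4 * k ^ 2 + 14 * k + 8 := by
    rw [hN, hw, hd]
    have hm' : m = 4 * k + 9 := by omega
    rw [hm', hpk]; ring_nf; omega
  -- valuation of N!
  have hvalN : padicValNat p (N !) = 2 * k + 1 := by
    rw [padicValNat_factorial (b := 2)
      (Nat.log_lt_of_lt_pow (by omega) (by rw [hNval, hpk]; nlinarith))]
    have h1 : Finset.Ico 1 2 = {1} := rfl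
    rw [h1, Finset.sum_singleton, pow_one]
    have hsplit : N = p * (2 * k + 1) + (2 * k + 3) := by rw [hNval, hpk]; ring
    rw [hsplit, Nat.mul_add_div (by omega), Nat.div_eq_of_lt (by omega)]
  -- valuation of gamma
  have hnotdvd2 : ¬ p ∣ 2 := fun h => by have := Nat.le_of_dvd (by norm_num) h; omega
  have hvalγ : padicValNat p (pGamma U) = 1 + k := by
    rw [hγ, padicValNat.mul (by positivity) (by positivity),
      padicValNat.mul (by positivity) (by positivity),
      padicValNat.mul (by positivity) (by positivity)]
    have h2p : padicValNat p (2 ^ p) = 0 :=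
      padicValNat.eq_zero_of_not_dvd (fun h => hnotdvd2 (hp.dvd_of_dvd_pow h))
    have hpfac : padicValNat p (p !) = 1 := by
      rw [padicValNat_factorial (b := 2)
        (Nat.log_lt_of_lt_pow hp.pos.ne' (by nlinarith [hp.two_le]))]
      have h1 : Finset.Ico 1 2 = {1} := rfl
      rw [h1, Finset.sum_singleton, pow_one, Nat.div_self hp.pos]
    have h2pk : padicValNat p ((2 * p) ^ k) = k := by
      rw [padicValNat.pow _ _,
        padicValNat.mul (by norm_num) hp.pos.ne',
        padicValNat.eq_zero_of_not_dvd hnotdvd2, padicValNat.self hp.one_lt]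
      omega
    have hkfac : padicValNat p (k !) = 0 :=
      padicValNat.eq_zero_of_not_dvd (fun h => by
        have := (Nat.Prime.dvd_factorial hp).1 h; omega)
    rw [h2p, hpfac, h2pk, hkfac]; omega
  -- valuation of tau
  have hτ : padicValRat p (pTau U) = (k : ℤ) := by
    rw [pTau, mul_div_assoc, padicValRat_neg_one_pow_mul,
      padicValRat.div (by exact_mod_cast (Nat.factorial_pos _).ne')
        (by exact_mod_cast (show pGamma U ≠ 0 by rw [hγ]; positivity)),
      ← hN, padicValRat.of_nat, padicValRat.of_nat, hvalN, hvalγ]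
    push_cast
    ring
  refine ⟨hw, hd, ?_, ?_⟩
  · rw [hτ]
  · have hsplit : N = 2 * p * k + (4 * k + 8) := by rw [hNval, hpk]; ring
    rw [hsplit, Nat.mul_add_div (by omega), Nat.div_eq_of_lt (by omega)]; omega

end
end

section
/- Let R = ℚ[c_1, c_2, c_3, …] and let u(T) = T + Σ_{n≥1} c_n · T^{n+1}/(n+1) in R⟦T⟧. Suppose t ∈ R⟦T⟧ has constant coefficient 0 and coefficient of T equal to 1, and satisfies u(t(T)) = T (substitution of power series), so t is the compositional inverse of u. Write t = T·h where h ∈ R⟦T⟧ has constant coefficient 1, so that T/t(T) = h⁻¹ (multiplicative inverse). Then for every n ≥ 1, n! times the coefficient of T^n in h⁻¹ equals n · Q_n; equivalently, the universal Bernoulli numbers B̂_n defined by u/t(u) = Σ_{n≥0} B̂_n u^n/n! satisfy B̂_n/n = Σ_{U : w(U)=n} τ_U · c^U. -/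
open Nat MvPolynomial

noncomputable section

section AuxLemmas

def pSub (U : ℕ →₀ ℕ) (n : ℕ) : ℕ →₀ ℕ := U - Finsupp.single n 1

lemma pWeight_eq_sum (U : ℕ →₀ ℕ) {s : Finset ℕ} (hs : U.support ⊆ s) :
    pWeight U = ∑ j ∈ s, j * U j :=
  Finsupp.sum_of_support_subset U hs _ (by simp)

lemma pDegree_eq_sum (U : ℕ →₀ ℕ) {s : Finset ℕ} (hs : U.support ⊆ s) :
    pDegree U = ∑ j ∈ s, U j :=
  Finsupp.sum_of_support_subset U hs _ (by simp)

lemma pGamma_eq_prod (U : ℕ →₀ ℕ) {s : Finset ℕ} (hs : U.support ⊆ s) :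
    pGamma U = ∏ j ∈ s, ((j + 1) ^ U j * (U j)!) :=
  Finsupp.prod_of_support_subset U hs _ (by simp)

lemma pGamma_pos (U : ℕ →₀ ℕ) : 0 < pGamma U := by
  rw [pGamma_eq_prod U (le_refl _)]
  exact Finset.prod_pos fun j _ => Nat.mul_pos (Nat.pow_pos (by omega)) (Nat.factorial_pos _)

lemma pDegree_eq_zero_iff (U : ℕ →₀ ℕ) : pDegree U = 0 ↔ U = 0 := by
  constructor
  · intro hd
    ext j
    simp only [Finsupp.coe_zero, Pi.zero_apply]
    by_contra hj
    have hjs : j ∈ U.support := Finsupp.mem_support_iff.mpr hj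
    have : U j ≤ pDegree U := by
      rw [pDegree_eq_sum U (le_refl _)]
      exact Finset.single_le_sum (f := fun j => U j) (fun _ _ => Nat.zero_le _) hjs
    omega
  · rintro rfl; simp [pDegree]

lemma mul_le_pWeight {U : ℕ →₀ ℕ} {n : ℕ} (hn : n ∈ U.support) : n * U n ≤ pWeight U := by
  rw [pWeight_eq_sum U (le_refl _)]
  exact Finset.single_le_sum (f := fun j => j * U j) (fun _ _ => Nat.zero_le _) hn

lemma cond_zero_iff (U : ℕ →₀ ℕ) : (U 0 = 0 ∧ pWeight U = 0) ↔ U = 0 := by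
  constructor
  · rintro ⟨h0, hw⟩
    ext j
    simp only [Finsupp.coe_zero, Pi.zero_apply]
    by_contra hj
    have hjs : j ∈ U.support := Finsupp.mem_support_iff.mpr hj
    have hj0 : j ≠ 0 := fun h => hj (h ▸ h0)
    have h1 := mul_le_pWeight hjs
    have : 1 ≤ j * U j := Nat.one_le_iff_ne_zero.mpr (by positivity)
    omega
  · rintro rfl; simp [pWeight]

section Sub
variable {U : ℕ →₀ ℕ} {n : ℕ}

lemma pSub_apply_ne {j : ℕ} (hj : j ≠ n) : pSub U n j = U j := by
  rw [pSub, Finsupp.tsub_apply, Finsupp.single_apply, if_neg (Ne.symm hj), Nat.sub_zero]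

lemma pSub_apply_self : pSub U n n = U n - 1 := by
  rw [pSub, Finsupp.tsub_apply, Finsupp.single_apply, if_pos rfl]

lemma pSub_support_subset : (pSub U n).support ⊆ U.support := by
  intro j hj
  rw [Finsupp.mem_support_iff] at hj ⊢
  intro h
  rcases eq_or_ne j n with rfl | hne
  · rw [pSub_apply_self] at hj; omega
  · rw [pSub_apply_ne hne] at hj; exact hj h

variable (hn : n ∈ U.support)
include hn

lemma pWeight_pSub : pWeight (pSub U n) + n = pWeight U := by
  have hUn : 1 ≤ U n := by have := Finsupp.mem_support_iff.mp hn; omega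
  have h1 : pWeight U = n * U n + ∑ j ∈ U.support.erase n, j * U j := by
    rw [pWeight_eq_sum U (le_refl _)]
    exact (Finset.add_sum_erase _ (fun j => j * U j) hn).symm
  have h2 : pWeight (pSub U n) = n * (U n - 1) + ∑ j ∈ U.support.erase n, j * U j := by
    rw [pWeight_eq_sum (pSub U n) pSub_support_subset,
      ← Finset.add_sum_erase _ (fun j => j * pSub U n j) hn, pSub_apply_self]
    congr 1
    exact Finset.sum_congr rfl fun j hj => by rw [pSub_apply_ne (Finset.ne_of_mem_erase hj)]
  have h3 : n * (U n - 1) + n = n * U n := by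
    conv_rhs => rw [show U n = (U n - 1) + 1 by omega]
    rw [Nat.mul_succ]
  omega

lemma pDegree_pSub : pDegree (pSub U n) + 1 = pDegree U := by
  have hUn : 1 ≤ U n := by have := Finsupp.mem_support_iff.mp hn; omega
  have h1 : pDegree U = U n + ∑ j ∈ U.support.erase n, U j := by
    rw [pDegree_eq_sum U (le_refl _)]
    exact (Finset.add_sum_erase _ (fun j => U j) hn).symm
  have h2 : pDegree (pSub U n) = (U n - 1) + ∑ j ∈ U.support.erase n, U j := by
    rw [pDegree_eq_sum (pSub U n) pSub_support_subset,
      ← Finset.add_sum_erase _ (fun j => pSub U n j) hn, pSub_apply_self]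
    congr 1
    exact Finset.sum_congr rfl fun j hj => by rw [pSub_apply_ne (Finset.ne_of_mem_erase hj)]
  omega

lemma pGamma_pSub : pGamma (pSub U n) * ((n + 1) * U n) = pGamma U := by
  have hUn : 1 ≤ U n := by have := Finsupp.mem_support_iff.mp hn; omega
  have h1 : pGamma U = ((n+1) ^ U n * (U n)!) * ∏ j ∈ U.support.erase n, ((j+1) ^ U j * (U j)!) := by
    rw [pGamma_eq_prod U (le_refl _)]
    exact (Finset.mul_prod_erase _ (fun j => (j+1) ^ U j * (U j)!) hn).symm
  have h2 : pGamma (pSub U n) = ((n+1) ^ (U n - 1) * (U n - 1)!) * ∏ j ∈ U.support.erase n, ((j+1) ^ U j * (U j)!) := by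
    rw [pGamma_eq_prod (pSub U n) pSub_support_subset,
      ← Finset.mul_prod_erase _ (fun j => (j+1) ^ (pSub U n j) * (pSub U n j)!) hn, pSub_apply_self]
    congr 1
    exact Finset.prod_congr rfl fun j hj => by rw [pSub_apply_ne (Finset.ne_of_mem_erase hj)]
  rw [h1, h2]
  obtain ⟨c, hc⟩ : ∃ c, U n = c + 1 := ⟨U n - 1, by omega⟩
  rw [hc]
  simp only [Nat.add_sub_cancel]
  rw [Nat.factorial_succ, pow_succ]
  ring

omit hn in
lemma pSub_zero_eq (h0 : U 0 = 0) : pSub U n 0 = 0 := by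
  rcases eq_or_ne (0:ℕ) n with rfl | hne
  · rw [pSub_apply_self]; omega
  · rw [pSub_apply_ne hne]; exact h0

end Sub

/-- coefficient of c^U in [T^m] h^k, where pWeight U = m -/
def Pco (k : ℤ) (U : ℕ →₀ ℕ) : ℚ :=
  if U = 0 then 1 else
    (-1) ^ pDegree U * k *
      (∏ i ∈ Finset.range (pDegree U - 1), ((pWeight U : ℚ) + k + 1 + i)) / (pGamma U : ℚ)

def Phi (m : ℕ) (k : ℤ) (U : ℕ →₀ ℕ) : ℚ :=
  if U 0 = 0 ∧ pWeight U = m then Pco k U else 0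

lemma support_subset_Icc {U : ℕ →₀ ℕ} {m : ℕ} (h0 : U 0 = 0) (hw : pWeight U = m) :
    U.support ⊆ Finset.Icc 1 m := by
  intro n hn
  have h1 := mul_le_pWeight hn
  have h2 : U n ≠ 0 := Finsupp.mem_support_iff.mp hn
  have h3 : n ≠ 0 := fun h => h2 (h ▸ h0)
  rw [Finset.mem_Icc]
  constructor
  · omega
  · calc n ≤ n * U n := Nat.le_mul_of_pos_right n (by omega)
      _ ≤ m := hw ▸ h1

lemma key_identity (m : ℕ) (hm : 1 ≤ m) (k : ℤ) (U : ℕ →₀ ℕ) :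
    Phi m k U = Phi m (k-1) U - ∑ n ∈ Finset.Icc 1 m,
      ((n : ℚ) + 1)⁻¹ * (if n ∈ U.support then Phi (m - n) (k + n) (pSub U n) else 0) := by
  by_cases hc : U 0 = 0 ∧ pWeight U = m
  · -- main case
    obtain ⟨h0, hw⟩ := hc
    have hU0 : U ≠ 0 := by
      intro h; subst h; simp [pWeight] at hw; omega
    have hsupp : U.support ⊆ Finset.Icc 1 m := support_subset_Icc h0 hw
    have hsum : ∑ n ∈ Finset.Icc 1 m,
        ((n : ℚ) + 1)⁻¹ * (if n ∈ U.support then Phi (m - n) (k + n) (pSub U n) else 0)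
        = ∑ n ∈ U.support, ((n : ℚ) + 1)⁻¹ * Pco (k + n) (pSub U n) := by
      rw [← Finset.sum_subset hsupp (fun x _ hx => by rw [if_neg hx, mul_zero])]
      apply Finset.sum_congr rfl
      intro n hn
      rw [if_pos hn]
      congr 1
      have hcond : pSub U n 0 = 0 ∧ pWeight (pSub U n) = m - n := by
        refine ⟨pSub_zero_eq h0, ?_⟩
        have := pWeight_pSub hn
        omega
      rw [Phi, if_pos hcond]
    rw [hsum, Phi, Phi, if_pos ⟨h0, hw⟩, if_pos ⟨h0, hw⟩]
    have hd1 : 1 ≤ pDegree U := by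
      rcases Nat.eq_zero_or_pos (pDegree U) with h | h
      · exact absurd ((pDegree_eq_zero_iff U).mp h) hU0
      · exact h
    have hγ : (pGamma U : ℚ) ≠ 0 := Nat.cast_ne_zero.mpr (Nat.pos_iff_ne_zero.mp (pGamma_pos U))
    rcases Nat.lt_or_ge (pDegree U) 2 with hd | hd
    · -- degree 1 case
      have hdeg : pDegree U = 1 := by omega
      -- support is a singleton {n₀} with U n₀ = 1
      have hcard : U.support.card = 1 := by
        have hle : U.support.card ≤ pDegree U := by
          rw [pDegree_eq_sum U (le_refl _)]
          calc U.support.card = ∑ _j ∈ U.support, 1 := by simp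
            _ ≤ ∑ j ∈ U.support, U j := Finset.sum_le_sum fun j hj => by
                have := Finsupp.mem_support_iff.mp hj; omega
        have hne : U.support.Nonempty := Finsupp.support_nonempty_iff.mpr hU0
        have := Finset.card_pos.mpr hne
        omega
      obtain ⟨n₀, hn₀⟩ := Finset.card_eq_one.mp hcard
      have hn₀mem : n₀ ∈ U.support := hn₀ ▸ Finset.mem_singleton_self n₀
      have hUn₀ : U n₀ = 1 := by
        have := pDegree_eq_sum U (le_refl _)
        rw [hn₀, Finset.sum_singleton, hdeg] at this
        omega
      have hm₀ : m = n₀ := by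
        have := pWeight_eq_sum U (le_refl _)
        rw [hn₀, Finset.sum_singleton, hUn₀, hw] at this
        omega
      have hγval : pGamma U = n₀ + 1 := by
        rw [pGamma_eq_prod U (le_refl _), hn₀, Finset.prod_singleton, hUn₀]
        simp
      have hPsub0 : pSub U n₀ = 0 := by
        rw [← pDegree_eq_zero_iff]
        have := pDegree_pSub hn₀mem
        omega
      rw [hn₀, Finset.sum_singleton, hPsub0]
      simp only [Pco, if_neg hU0, if_pos rfl, hdeg, hγval]
      simp only [Nat.sub_self, Finset.range_zero, Finset.prod_empty, pow_one]
      have hne : ((n₀ : ℚ) + 1) ≠ 0 := by positivity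
      field_simp
      rw [if_pos trivial]
      push_cast
      ring
    · -- degree ≥ 2 case
      obtain ⟨e, he⟩ : ∃ e, pDegree U = e + 2 := ⟨pDegree U - 2, by omega⟩
      set S : ℚ := ∏ i ∈ Finset.range e, ((m : ℚ) + k + 1 + i) with hS
      have hsum2 : ∑ n ∈ U.support, ((n : ℚ) + 1)⁻¹ * Pco (k + n) (pSub U n)
          = ∑ n ∈ U.support, (-1) ^ (e+1) * ((k : ℚ) + n) * S * (U n) / (pGamma U : ℚ) := by
        apply Finset.sum_congr rfl
        intro n hn
        have hnm : n ≤ m := (Finset.mem_Icc.mp (hsupp hn)).2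
        have hdV : pDegree (pSub U n) = e + 1 := by have := pDegree_pSub hn; omega
        have hVne : pSub U n ≠ 0 := by
          intro hz
          have := (pDegree_eq_zero_iff (pSub U n)).mpr hz
          omega
        have hwV : pWeight (pSub U n) = m - n := by have := pWeight_pSub hn; omega
        have hγV : (pGamma (pSub U n) : ℚ) * ((n : ℚ) + 1) * (U n : ℚ) = (pGamma U : ℚ) := by
          have := pGamma_pSub hn
          push_cast [← this]
          ring
        have hγVne : (pGamma (pSub U n) : ℚ) ≠ 0 :=
          Nat.cast_ne_zero.mpr (Nat.pos_iff_ne_zero.mp (pGamma_pos _))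
        have hUn : (U n : ℚ) ≠ 0 := Nat.cast_ne_zero.mpr (Finsupp.mem_support_iff.mp hn)
        have hne1 : ((n : ℚ) + 1) ≠ 0 := by positivity
        rw [Pco, if_neg hVne, hdV, hwV]
        have hcast : ((m - n : ℕ) : ℚ) = (m : ℚ) - n := Nat.cast_sub hnm
        have hcast2 : ((k + (n:ℕ) : ℤ) : ℚ) = (k : ℚ) + n := by push_cast; ring
        simp only [Nat.add_sub_cancel, hcast, hcast2]
        have hprod : (∏ i ∈ Finset.range e, ((m:ℚ) - n + ((k:ℚ) + n) + 1 + i)) = S :=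
          Finset.prod_congr rfl fun i _ => by ring
        rw [hprod, ← hγV]
        field_simp
      rw [hsum2, ← Finset.sum_div]
      have hfact : ∑ n ∈ U.support, (-1 : ℚ) ^ (e+1) * ((k : ℚ) + n) * S * (U n)
          = (-1) ^ (e+1) * S * ((k : ℚ) * (e + 2) + m) := by
        have h1 : ∑ n ∈ U.support, (-1 : ℚ) ^ (e+1) * ((k : ℚ) + n) * S * (U n)
            = (-1 : ℚ)^(e+1) * S * ∑ n ∈ U.support, (((k:ℚ) * U n) + (n * U n)) := by
          rw [Finset.mul_sum]
          apply Finset.sum_congr rfl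
          intro n _
          ring
        rw [h1, Finset.sum_add_distrib, ← Finset.mul_sum]
        have h2 : ∑ n ∈ U.support, ((U n : ℚ)) = ((e : ℚ) + 2) := by
          have h := pDegree_eq_sum U (le_refl _)
          rw [he] at h
          calc ∑ n ∈ U.support, ((U n : ℚ)) = ((∑ n ∈ U.support, U n : ℕ) : ℚ) := by push_cast; rfl
            _ = ((e + 2 : ℕ) : ℚ) := by rw [← h]
            _ = (e : ℚ) + 2 := by push_cast; ring
        have h3 : ∑ n ∈ U.support, ((n : ℚ) * U n) = (m : ℚ) := by
          have hw' := pWeight_eq_sum U (le_refl _)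
          rw [hw] at hw'
          calc ∑ n ∈ U.support, ((n : ℚ) * U n) = ((∑ n ∈ U.support, n * U n : ℕ) : ℚ) := by push_cast; rfl
            _ = (m : ℚ) := by rw [← hw']
        rw [h2, h3]
      rw [hfact]
      rw [Pco, Pco, if_neg hU0, if_neg hU0, he, hw]
      simp only [show e + 2 - 1 = e + 1 from rfl]
      have hL : ∏ i ∈ Finset.range (e+1), ((m : ℚ) + k + 1 + i) = S * ((m : ℚ) + k + 1 + e) := by
        rw [Finset.prod_range_succ]
      have hR : ∏ i ∈ Finset.range (e+1), ((m : ℚ) + (k - 1) + 1 + i) = ((m:ℚ) + k) * S := by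
        rw [Finset.prod_range_succ']
        push_cast
        have h1 : ∀ i ∈ Finset.range e, ((m : ℚ) + ((k:ℚ) - 1) + 1 + ((i:ℚ) + 1)) = ((m:ℚ) + k + 1 + i) :=
          fun i _ => by ring
        rw [Finset.prod_congr rfl h1, ← hS]
        ring
      push_cast at hL hR ⊢
      rw [hL, hR]
      rw [div_sub_div_same, div_eq_div_iff hγ hγ]
      ring
  · -- degenerate case
    rw [Phi, Phi, if_neg hc, if_neg hc]
    have : ∀ n ∈ Finset.Icc 1 m,
        ((n : ℚ) + 1)⁻¹ * (if n ∈ U.support then Phi (m - n) (k + n) (pSub U n) else 0) = 0 := by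
      intro n hn
      rcases Finset.mem_Icc.mp hn with ⟨hn1, hnm⟩
      by_cases hns : n ∈ U.support
      · rw [if_pos hns]
        have : Phi (m - n) (k + n) (pSub U n) = 0 := by
          rw [Phi, if_neg]
          rintro ⟨hV0, hVw⟩
          apply hc
          have hn0 : n ≠ 0 := by omega
          constructor
          · rw [← pSub_apply_ne (Ne.symm hn0)]; exact hV0
          · have := pWeight_pSub hns
            omega
        rw [this, mul_zero]
      · rw [if_neg hns, mul_zero]
    rw [Finset.sum_congr rfl this, Finset.sum_const_zero, sub_zero]

abbrev Rg := MvPolynomial ℕ ℚ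

lemma coeff_X_pow_mul_of_lt {k j : ℕ} (h : k < j) (ps : PowerSeries Rg) :
    PowerSeries.coeff k (PowerSeries.X ^ j * ps) = 0 :=
  PowerSeries.X_pow_dvd_iff.mp ⟨ps, rfl⟩ k h

section Main
variable (t h g : PowerSeries Rg)
  (hcomp : ∀ k : ℕ,
      PowerSeries.coeff k
        (t + ∑ n ∈ Finset.Icc 1 k,
          PowerSeries.C (MvPolynomial.C (((n : ℚ) + 1)⁻¹) * MvPolynomial.X n) * t ^ (n + 1))
      = PowerSeries.coeff k (PowerSeries.X : PowerSeries Rg))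
  (hh : PowerSeries.constantCoeff h = 1) (hth : t = PowerSeries.X * h) (hg : h * g = 1)

def Amv (n : ℕ) : Rg := MvPolynomial.C (((n : ℚ) + 1)⁻¹) * MvPolynomial.X n

include hth in
lemma coeff_t_pow (n k : ℕ) (hk : k ≤ n) : PowerSeries.coeff k (t ^ (n+1)) = 0 := by
  rw [hth, mul_pow]
  exact coeff_X_pow_mul_of_lt (by omega) _

include hcomp hth in
lemma hF (M k : ℕ) (hk : k ≤ M) :
    PowerSeries.coeff k
      (PowerSeries.X - t - ∑ n ∈ Finset.Icc 1 M, PowerSeries.C (Amv n) * t ^ (n + 1)) = 0 := by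
  have hs : ∑ n ∈ Finset.Icc 1 M, PowerSeries.coeff k (PowerSeries.C (Amv n) * t ^ (n + 1))
      = ∑ n ∈ Finset.Icc 1 k, PowerSeries.coeff k (PowerSeries.C (Amv n) * t ^ (n + 1)) := by
    symm
    apply Finset.sum_subset
    · intro x hx
      rw [Finset.mem_Icc] at hx ⊢
      omega
    · intro x hx hx'
      rw [Finset.mem_Icc] at hx hx'
      rw [PowerSeries.coeff_C_mul, coeff_t_pow t h hth x k (by omega), mul_zero]
  rw [map_sub, map_sub, map_sum, hs, ← map_sum]
  have := hcomp k
  rw [map_add, map_sum] at this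
  unfold Amv
  rw [map_sum]
  linear_combination -this

-- the unit
def Hu : (PowerSeries Rg)ˣ := Units.mkOfMulEqOne h g hg

include hcomp hh hth hg in
lemma recursion (m : ℕ) (hm : 1 ≤ m) (k : ℤ) :
    PowerSeries.coeff m ((Hu h g hg ^ k).val)
      = PowerSeries.coeff m ((Hu h g hg ^ (k-1)).val)
        - ∑ n ∈ Finset.Icc 1 m, Amv n * PowerSeries.coeff (m-n) ((Hu h g hg ^ (k + n)).val) := by
  set H := Hu h g hg with hH
  set ps := (H ^ (k-1)).val with hps
  have hmul : ∀ a : ℤ, h ^ (a.toNat) * ps = (H ^ (a.toNat + (k-1))).val := by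
    intro a
    have h1 : h ^ a.toNat = ((H ^ (a.toNat : ℕ)) : (PowerSeries Rg)ˣ).val := by
      rw [Units.val_pow_eq_pow_val]; rfl
    rw [h1, hps, ← Units.val_mul, ← zpow_natCast, ← zpow_add]
  have hzero : PowerSeries.coeff (m+1)
      ((PowerSeries.X - t - ∑ n ∈ Finset.Icc 1 (m+1), PowerSeries.C (Amv n) * t ^ (n + 1)) * ps) = 0 := by
    rw [PowerSeries.coeff_mul]
    apply Finset.sum_eq_zero
    intro p hp
    replace hp := Finset.HasAntidiagonal.mem_antidiagonal.mp hp
    rw [hF t h hcomp hth (m+1) p.1 (by omega), zero_mul]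
  -- expand the product
  have hexp : (PowerSeries.X - t - ∑ n ∈ Finset.Icc 1 (m+1), PowerSeries.C (Amv n) * t ^ (n + 1)) * ps
      = PowerSeries.X * ps - PowerSeries.X * (h * ps)
        - ∑ n ∈ Finset.Icc 1 (m+1), PowerSeries.C (Amv n) * (PowerSeries.X ^ (n+1) * (h ^ (n+1) * ps)) := by
    rw [hth]
    rw [sub_mul, sub_mul, Finset.sum_mul]
    refine congrArg₂ (· - ·) ?_ ?_
    · ring
    · apply Finset.sum_congr rfl
      intro n _
      rw [mul_pow]
      ring
  rw [hexp] at hzero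
  rw [map_sub, map_sub, map_sum] at hzero
  -- simplify each piece
  have e1 : PowerSeries.coeff (m+1) (PowerSeries.X * ps) = PowerSeries.coeff m ps :=
    PowerSeries.coeff_succ_X_mul m ps
  have e2 : PowerSeries.coeff (m+1) (PowerSeries.X * (h * ps))
      = PowerSeries.coeff m ((H ^ k).val) := by
    rw [PowerSeries.coeff_succ_X_mul]
    congr 1
    have := hmul 1
    simp only [Int.toNat_one, pow_one] at this
    rw [this]
    congr 1
    ring_nf
  have e3 : ∀ n ∈ Finset.Icc 1 m,
      PowerSeries.coeff (m+1) (PowerSeries.C (Amv n) * (PowerSeries.X ^ (n+1) * (h ^ (n+1) * ps)))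
      = Amv n * PowerSeries.coeff (m-n) ((H ^ (k + n)).val) := by
    intro n hn
    rw [Finset.mem_Icc] at hn
    rw [PowerSeries.coeff_C_mul]
    congr 1
    have hidx : m + 1 = (m - n) + (n + 1) := by omega
    rw [hidx, PowerSeries.coeff_X_pow_mul]
    congr 1
    have := hmul (n+1)
    have htn : ((n : ℤ) + 1).toNat = n + 1 := by omega
    rw [htn] at this
    rw [this]
    congr 1
    push_cast
    ring
  have e4 : PowerSeries.coeff (m+1)
      (PowerSeries.C (Amv (m+1)) * (PowerSeries.X ^ (m+2) * (h ^ (m+2) * ps))) = 0 := by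
    rw [PowerSeries.coeff_C_mul, coeff_X_pow_mul_of_lt (by omega), mul_zero]
  rw [Finset.sum_Icc_succ_top (by omega : 1 ≤ m + 1)] at hzero
  rw [e1, e2, e4] at hzero
  rw [Finset.sum_congr rfl e3] at hzero
  rw [hps] at hzero ⊢
  linear_combination -hzero

include hcomp hh hth hg in
lemma mainlemma : ∀ (m : ℕ) (k : ℤ) (U : ℕ →₀ ℕ),
    MvPolynomial.coeff U (PowerSeries.coeff m ((Hu h g hg ^ k).val)) = Phi m k U := by
  intro m
  induction m using Nat.strong_induction_on with
  | _ m IH =>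
    set H := Hu h g hg with hH
    rcases Nat.eq_zero_or_pos m with rfl | hm
    · -- base case m = 0
      intro k U
      have hconst : PowerSeries.constantCoeff ((H ^ k).val) = 1 := by
        have h1 : Units.map (PowerSeries.constantCoeff (R := Rg)).toMonoidHom H = 1 := by
          apply Units.ext
          simpa [hH, Hu] using hh
        calc PowerSeries.constantCoeff ((H ^ k).val)
            = ((Units.map (PowerSeries.constantCoeff (R := Rg)).toMonoidHom (H ^ k))).val := rfl
          _ = ((Units.map (PowerSeries.constantCoeff (R := Rg)).toMonoidHom H) ^ k).val := by
              rw [MonoidHom.map_zpow]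
          _ = 1 := by rw [h1, one_zpow, Units.val_one]
      rw [PowerSeries.coeff_zero_eq_constantCoeff, hconst]
      rw [MvPolynomial.coeff_one, Phi]
      rcases eq_or_ne U 0 with rfl | hU
      · rw [if_pos rfl, if_pos (by simp [pWeight]), Pco, if_pos rfl]
      · rw [if_neg (fun hh' => hU hh'.symm), if_neg (fun hc => hU ((cond_zero_iff U).mp hc))]
    · -- m ≥ 1
      intro k U
      induction k using Int.induction_on with
      | zero =>
        rw [zpow_zero, Units.val_one, PowerSeries.coeff_one, if_neg (by omega)]
        rw [MvPolynomial.coeff_zero, Phi]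
        by_cases hc : U 0 = 0 ∧ pWeight U = m
        · rw [if_pos hc]
          have hU : U ≠ 0 := by
            intro hU0
            rw [hU0] at hc
            have := (cond_zero_iff (0 : ℕ →₀ ℕ)).mpr rfl
            omega
          rw [Pco, if_neg hU]
          push_cast
          ring
        · rw [if_neg hc]
      | succ i ih =>
        have hrec := recursion t h g hcomp hh hth hg m hm ((i : ℤ) + 1)
        have hco := congrArg (MvPolynomial.coeff U) hrec
        rw [MvPolynomial.coeff_sub, MvPolynomial.coeff_sum] at hco
        have hidx : ((i : ℤ) + 1) - 1 = (i : ℤ) := by ring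
        rw [hidx] at hco
        rw [ih] at hco
        have hterm : ∀ n ∈ Finset.Icc 1 m,
            MvPolynomial.coeff U (Amv n * PowerSeries.coeff (m - n) ((H ^ ((i : ℤ) + 1 + n)).val))
            = ((n : ℚ) + 1)⁻¹ *
              (if n ∈ U.support then Phi (m - n) (((i : ℤ) + 1) + n) (pSub U n) else 0) := by
          intro n hn
          rw [Finset.mem_Icc] at hn
          rw [Amv, mul_assoc, MvPolynomial.coeff_C_mul,
            mul_comm (MvPolynomial.X n) _, MvPolynomial.coeff_mul_X']
          congr 1
          by_cases hns : n ∈ U.support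
          · rw [if_pos hns, if_pos hns]
            exact IH (m - n) (by omega) ((i : ℤ) + 1 + n) (pSub U n)
          · rw [if_neg hns, if_neg hns]
        rw [Finset.sum_congr rfl hterm] at hco
        rw [hco, key_identity m hm ((i : ℤ) + 1) U, hidx]
      | pred i ih =>
        have hrec := recursion t h g hcomp hh hth hg m hm (-(i : ℤ))
        have hco := congrArg (MvPolynomial.coeff U) hrec
        rw [MvPolynomial.coeff_sub, MvPolynomial.coeff_sum] at hco
        rw [ih] at hco
        have hterm : ∀ n ∈ Finset.Icc 1 m,
            MvPolynomial.coeff U (Amv n * PowerSeries.coeff (m - n) ((H ^ (-(i : ℤ) + n)).val))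
            = ((n : ℚ) + 1)⁻¹ *
              (if n ∈ U.support then Phi (m - n) (-(i : ℤ) + n) (pSub U n) else 0) := by
          intro n hn
          rw [Finset.mem_Icc] at hn
          rw [Amv, mul_assoc, MvPolynomial.coeff_C_mul,
            mul_comm (MvPolynomial.X n) _, MvPolynomial.coeff_mul_X']
          congr 1
          by_cases hns : n ∈ U.support
          · rw [if_pos hns, if_pos hns]
            exact IH (m - n) (by omega) (-(i : ℤ) + n) (pSub U n)
          · rw [if_neg hns, if_neg hns]
        rw [Finset.sum_congr rfl hterm] at hco
        have hkey := key_identity m hm (-(i : ℤ)) U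
        -- hco : Phi m (-i) U = coeff U (coeff m (H ^ (-i-1)).val) - Σ
        -- hkey : Phi m (-i) U = Phi m (-i-1) U - Σ
        have : MvPolynomial.coeff U (PowerSeries.coeff m ((H ^ (-(i : ℤ) - 1)).val))
            = Phi m (-(i : ℤ) - 1) U := by
          linear_combination hkey - hco
        convert this using 3 <;> ring
end Main

lemma fact_prod_lemma (a : ℕ) (ha : 1 ≤ a) :
    ∀ t : ℕ, (a - 1)! * ∏ i ∈ Finset.range t, (a + i) = (a - 1 + t)! := by
  intro t
  induction t with
  | zero => simp
  | succ t iht =>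
    rw [Finset.prod_range_succ, ← mul_assoc, iht]
    have : a - 1 + (t + 1) = (a - 1 + t) + 1 := by omega
    rw [this, Nat.factorial_succ]
    have : a - 1 + t + 1 = a + t := by omega
    rw [this]
    ring

open PowerSeries in
/-- Proposition 2.2.6 (Schur function expression of the universal Bernoulli numbers):
if t(T) is the compositional inverse of u(T) = T + ∑_{n≥1} c_n T^{n+1}/(n+1)
(the hypothesis `hcomp` states u(t(T)) = T coefficientwise: the coefficient of T^k only
involves the terms with n ≤ k since t has order ≥ 1), and T/t(T) = h⁻¹ with
t = T·h and h·g = 1, then n!·[T^n](h⁻¹) = n·Q_n, i.e. B̂_n/n = ∑_{w(U)=n} τ_U c^U. -/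
theorem schur_expression (t h g : PowerSeries (MvPolynomial ℕ ℚ))
    (ht0 : constantCoeff t = 0) (ht1 : coeff 1 t = 1)
    (hcomp : ∀ k : ℕ,
      coeff k
        (t + ∑ n ∈ Finset.Icc 1 k,
          PowerSeries.C (MvPolynomial.C (((n : ℚ) + 1)⁻¹) * MvPolynomial.X n) * t ^ (n + 1))
      = coeff k (PowerSeries.X : PowerSeries (MvPolynomial ℕ ℚ)))
    (hh : constantCoeff h = 1) (hth : t = PowerSeries.X * h) (hg : h * g = 1) :
    ∀ n : ℕ, 1 ≤ n →
      (n ! : MvPolynomial ℕ ℚ) * coeff n g = (n : MvPolynomial ℕ ℚ) * Q n := by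
  classical
  intro n hn
  -- coefficients of g
  have hgval : ((Hu h g hg ^ (-1 : ℤ)).val) = g := by
    rw [zpow_neg_one]
    rfl
  have hgco : ∀ U : ℕ →₀ ℕ,
      MvPolynomial.coeff U (PowerSeries.coeff n g) = Phi n (-1) U := by
    intro U
    rw [← hgval]
    exact mainlemma t h g hcomp hh hth hg n (-1) U
  -- finiteness of the partition set
  set W : ℕ →₀ ℕ := (Finset.Icc 1 n).sum fun j => Finsupp.single j n with hW
  have hWval : ∀ j ∈ Finset.Icc 1 n, n ≤ W j := by
    intro j hj
    have h1 : W j = ∑ j' ∈ Finset.Icc 1 n, (Finsupp.single j' n) j := by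
      rw [hW, Finsupp.finset_sum_apply]
    rw [h1]
    calc n = (Finsupp.single j n) j := by rw [Finsupp.single_eq_same]
      _ ≤ ∑ j' ∈ Finset.Icc 1 n, (Finsupp.single j' n) j :=
        Finset.single_le_sum (f := fun j' => (Finsupp.single j' n) j)
          (fun _ _ => Nat.zero_le _) hj
  set F : Finset (ℕ →₀ ℕ) :=
    (Finset.Icc (0 : ℕ →₀ ℕ) W).filter (fun U => U 0 = 0 ∧ pWeight U = n) with hF
  have hmemF : ∀ U : ℕ →₀ ℕ, U ∈ F ↔ (U 0 = 0 ∧ pWeight U = n) := by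
    intro U
    rw [hF, Finset.mem_filter]
    constructor
    · exact fun hu => hu.2
    · rintro ⟨h0, hw⟩
      refine ⟨Finset.mem_Icc.mpr ⟨_root_.zero_le, ?_⟩, h0, hw⟩
      rw [Finsupp.le_def]
      intro i
      rcases Nat.eq_zero_or_pos (U i) with hz | hp
      · rw [hz]; exact Nat.zero_le _
      · have hi : i ∈ U.support := Finsupp.mem_support_iff.mpr (by omega)
        have him : i ∈ Finset.Icc 1 n := support_subset_Icc h0 hw hi
        have h1 : 1 ≤ i := (Finset.mem_Icc.mp him).1
        have h2 := mul_le_pWeight hi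
        calc U i ≤ i * U i := Nat.le_mul_of_pos_left _ (by omega)
          _ ≤ n := hw ▸ h2
          _ ≤ W i := hWval i him
  have hSF : {U : ℕ →₀ ℕ | U 0 = 0 ∧ pWeight U = n} = (↑F : Set (ℕ →₀ ℕ)) := by
    ext U
    simp [hmemF U]
  have hQ : Q n = ∑ U ∈ F, monomial U (pTau U) := by
    rw [Q, hSF, finsum_mem_coe_finset]
  -- compare coefficients
  apply MvPolynomial.ext
  intro V
  have hnatcast : ((n ! : ℕ) : MvPolynomial ℕ ℚ) = MvPolynomial.C ((n ! : ℕ) : ℚ) :=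
    (map_natCast (MvPolynomial.C : ℚ →+* MvPolynomial ℕ ℚ) (n !)).symm
  have hncast : ((n : ℕ) : MvPolynomial ℕ ℚ) = MvPolynomial.C ((n : ℕ) : ℚ) :=
    (map_natCast (MvPolynomial.C : ℚ →+* MvPolynomial ℕ ℚ) n).symm
  rw [hnatcast, hncast, MvPolynomial.coeff_C_mul, MvPolynomial.coeff_C_mul, hgco V, hQ,
    MvPolynomial.coeff_sum]
  simp only [MvPolynomial.coeff_monomial]
  rw [Finset.sum_ite_eq' F V (fun U => pTau U)]
  by_cases hc : V 0 = 0 ∧ pWeight V = n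
  · rw [if_pos ((hmemF V).mpr hc), Phi, if_pos hc]
    obtain ⟨h0, hw⟩ := hc
    have hV : V ≠ 0 := by
      intro hV0
      rw [hV0] at hw
      have : pWeight (0 : ℕ →₀ ℕ) = 0 := by simp [pWeight]
      omega
    have hd1 : 1 ≤ pDegree V := by
      rcases Nat.eq_zero_or_pos (pDegree V) with hz | hp
      · exact absurd ((pDegree_eq_zero_iff V).mp hz) hV
      · exact hp
    obtain ⟨d', hd'⟩ : ∃ d', pDegree V = d' + 1 := ⟨pDegree V - 1, by omega⟩
    have hγ : (pGamma V : ℚ) ≠ 0 :=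
      Nat.cast_ne_zero.mpr (Nat.pos_iff_ne_zero.mp (pGamma_pos V))
    rw [Pco, if_neg hV, pTau, hd', hw]
    simp only [show d' + 1 - 1 = d' from rfl]
    have hprod : (∏ i ∈ Finset.range d', ((n : ℚ) + ((-1 : ℤ) : ℚ) + 1 + (i : ℚ)))
        = ((∏ i ∈ Finset.range d', (n + i) : ℕ) : ℚ) := by
      push_cast
      exact Finset.prod_congr rfl fun i _ => by ring
    rw [hprod]
    have hfac : n ! * (∏ i ∈ Finset.range d', (n + i)) = n * (n + (d' + 1) - 2)! := by
      have h1 := fact_prod_lemma n hn d'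
      have h2 : n ! = n * (n - 1)! := (Nat.mul_factorial_pred (by omega)).symm
      have h3 : n - 1 + d' = n + (d' + 1) - 2 := by omega
      rw [h2, mul_assoc, h1, h3]
    have hfacq : ((n ! : ℕ) : ℚ) * ((∏ i ∈ Finset.range d', (n + i) : ℕ) : ℚ)
        = ((n : ℕ) : ℚ) * (((n + (d' + 1) - 2)! : ℕ) : ℚ) := by
      exact_mod_cast hfac
    push_cast
    rw [← mul_div_assoc, ← mul_div_assoc, div_eq_div_iff hγ hγ]
    push_cast at hfacq
    linear_combination ((-1 : ℚ)) ^ d' * (pGamma V : ℚ) * hfacq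
  · rw [if_neg (fun hm => hc ((hmemF V).mp hm)), Phi, if_neg hc, mul_zero, mul_zero]


end AuxLemmas

end
end

section
/- Let p be an odd prime and let m ≥ 2 be an integer with m ≢ 0 (mod p−1). Then every nonzero rational coefficient of the polynomial Q_m ∈ ℚ[c_1, c_2, c_3, …] has nonnegative p-adic valuation; that is, p does not divide the denominator of B̂_m/m. -/
open Nat MvPolynomial

noncomputable section

section Helpers

variable {p : ℕ} [Fact p.Prime]

lemma vdvd_le {a b : ℕ} (h : a ∣ b) (hb : b ≠ 0) : padicValNat p a ≤ padicValNat p b :=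
  (padicValNat_dvd_iff_le hb).1 (pow_padicValNat_dvd.trans h)

lemma vfact_add (x y : ℕ) :
    padicValNat p (x !) + padicValNat p (y !) ≤ padicValNat p ((x + y)!) := by
  have h := Nat.factorial_mul_factorial_dvd_factorial_add x y
  have := vdvd_le (p := p) h (Nat.factorial_ne_zero _)
  rwa [padicValNat.mul (Nat.factorial_ne_zero _) (Nat.factorial_ne_zero _)] at this

lemma vfact_mono {x y : ℕ} (h : x ≤ y) :
    padicValNat p (x !) ≤ padicValNat p (y !) :=
  vdvd_le (Nat.factorial_dvd_factorial h) (Nat.factorial_ne_zero _)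

lemma pow_mul_factorial_dvd (a : ℕ) (ha : 1 ≤ a) : ∀ k : ℕ, a ^ k * k ! ∣ (a * k)! := by
  intro k
  induction k with
  | zero => simp
  | succ k ih =>
    rw [Nat.mul_succ]
    have h2 : a ^ (k+1) * (k+1)! = (a ^ k * k !) * (a * k + a) := by
      rw [pow_succ, Nat.factorial_succ]; ring
    have h1 : a * k + a = (a * k + a - 1) + 1 := by omega
    rw [h2, h1, Nat.factorial_succ]
    have h3 : a ^ k * k ! ∣ (a * k + a - 1)! :=
      ih.trans (Nat.factorial_dvd_factorial (by omega))
    calc a ^ k * k ! * (a * k + a - 1 + 1) ∣ (a * k + a - 1)! * (a * k + a - 1 + 1) :=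
          mul_dvd_mul_right h3 _
      _ = (a * k + a - 1 + 1) * (a * k + a - 1)! := by ring
lemma vC0 {a : ℕ} (ha : a ≠ 0) (k : ℕ) :
    k * padicValNat p a + padicValNat p (k !) ≤ padicValNat p ((a * k)!) := by
  have h := vdvd_le (p := p) (pow_mul_factorial_dvd a (Nat.one_le_iff_ne_zero.2 ha) k)
    (Nat.factorial_ne_zero _)
  rwa [padicValNat.mul (pow_ne_zero _ ha) (Nat.factorial_ne_zero _),
    padicValNat.pow _ _] at h

lemma vfact_pow_mul (t k : ℕ) :
    padicValNat p ((p ^ t * k)!) =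
      padicValNat p (k !) + k * ∑ r ∈ Finset.range t, p ^ r := by
  induction t with
  | zero => simp
  | succ t ih =>
    have h : p ^ (t+1) * k = p * (p ^ t * k) := by ring
    rw [h, padicValNat_factorial_mul, ih, Finset.sum_range_succ]; ring

omit [Fact p.Prime] in
lemma two_mul_add_one_le_pow (hp3 : 3 ≤ p) : ∀ r : ℕ, 2 * r + 1 ≤ p ^ r := by
  intro r
  induction r with
  | zero => simp
  | succ r ih =>
    have : p ^ (r+1) = p * p ^ r := by ring
    have h2 : 3 * (2 * r + 1) ≤ p * p ^ r :=
      Nat.mul_le_mul hp3 ih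
    omega

omit [Fact p.Prime] in
lemma sq_le_sum_pow (hp3 : 3 ≤ p) (t : ℕ) : t * t ≤ ∑ r ∈ Finset.range t, p ^ r := by
  induction t with
  | zero => simp
  | succ t ih =>
    rw [Finset.sum_range_succ]
    have := two_mul_add_one_le_pow hp3 t
    have hexp : (t+1)*(t+1) = t*t + (2*t+1) := by ring
    omega

lemma v_le_self_sub_one {k : ℕ} (hk : 1 ≤ k) : padicValNat p k ≤ k - 1 := by
  have h1 : p ^ padicValNat p k ∣ k := pow_padicValNat_dvd
  have h2 : p ^ padicValNat p k ≤ k := Nat.le_of_dvd (by omega) h1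
  have h3 : padicValNat p k < p ^ padicValNat p k :=
    Nat.lt_pow_self (Fact.out : p.Prime).one_lt
  omega

/-- Key lemma: for `a ≥ 2`, `a ≠ p`, `k ≥ 1`,
`v((ak-2)!) ≥ k v(a) + v(k!)`. -/
lemma claimC (hp3 : 3 ≤ p) {a k : ℕ} (ha2 : 2 ≤ a) (hap : a ≠ p) (hk : 1 ≤ k) :
    k * padicValNat p a + padicValNat p (k !) ≤ padicValNat p ((a * k - 2)!) := by
  by_cases ht : padicValNat p a = 0
  · rw [ht, Nat.mul_zero, Nat.zero_add]
    rcases Nat.lt_or_ge k 2 with hk2 | hk2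
    · interval_cases k
      simp
    · refine vfact_mono ?_
      have : 2 * k ≤ a * k := Nat.mul_le_mul_right k ha2
      omega
  · -- t = v_p(a) ≥ 1
    set t := padicValNat p a with htdef
    have ht1 : 1 ≤ t := Nat.one_le_iff_ne_zero.2 ht
    obtain ⟨u, hu⟩ : p ^ t ∣ a := pow_padicValNat_dvd
    have hp2 : 2 ≤ p := hp3.trans' (by norm_num)
    have hq3 : 3 ≤ p ^ t := by
      calc 3 ≤ p := hp3
        _ ≤ p ^ t := Nat.le_self_pow (by omega) p
    have hu1 : 1 ≤ u := by
      rcases Nat.eq_zero_or_pos u with h | h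
      · subst h; simp at hu; omega
      · exact h
    rcases Nat.lt_or_ge u 2 with hu2 | hu2
    · -- u = 1 : a = p ^ t, and t ≥ 2
      have hu1' : u = 1 := by omega
      have ha : a = p ^ t := by rw [hu, hu1', Nat.mul_one]
      have ht2 : 2 ≤ t := by
        rcases Nat.lt_or_ge t 2 with h | h
        · exfalso
          have h1 : t = 1 := by omega
          rw [h1, pow_one] at ha
          exact hap ha
        · exact h
      -- exact valuation computation
      have hM : a * k = p ^ t * k := by rw [ha]
      have hM2 : 2 ≤ a * k := le_trans (by omega) (Nat.le_mul_of_pos_right a hk)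
      obtain ⟨n, hn⟩ : ∃ n, a * k = n + 2 := ⟨a * k - 2, by omega⟩
      have hEX : padicValNat p ((a*k)!) =
          padicValNat p (k !) + k * ∑ r ∈ Finset.range t, p ^ r := by
        rw [hM]; exact vfact_pow_mul t k
      have hfac : padicValNat p ((n+2)!) =
          padicValNat p (n+2) + padicValNat p (n+1) + padicValNat p (n !) := by
        rw [Nat.factorial_succ, Nat.factorial_succ,
          padicValNat.mul (by omega) (Nat.mul_ne_zero (by omega) (Nat.factorial_ne_zero n)),
          padicValNat.mul (by omega) (Nat.factorial_ne_zero n)]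
        ring
      have hpM : p ∣ n + 2 := by
        rw [← hn, hM]
        exact Dvd.dvd.mul_right (dvd_pow_self p (by omega)) k
      have hv1 : padicValNat p (n+1) = 0 := by
        apply padicValNat.eq_zero_of_not_dvd
        intro hdvd
        have h1 : p ∣ n + 2 - (n + 1) := Nat.dvd_sub hpM hdvd
        simp only [Nat.add_sub_cancel_left, show n + 2 - (n+1) = 1 by omega] at h1
        have := Nat.le_of_dvd (by norm_num) h1
        omega
      have hv2 : padicValNat p (n+2) = t + padicValNat p k := by
        rw [← hn, hM, padicValNat.mul (by positivity) (by omega), padicValNat.prime_pow]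
      have heq : t + padicValNat p k + padicValNat p (n !) =
          padicValNat p (k !) + k * ∑ r ∈ Finset.range t, p ^ r := by
        rw [hn] at hEX
        omega
      have hvk : padicValNat p k ≤ k - 1 := v_le_self_sub_one hk
      have e1 : t + padicValNat p k ≤ t * k := by
        have h1 : k - 1 ≤ t * (k-1) := Nat.le_mul_of_pos_left _ (by omega)
        have h2 : t * k = t * (k-1) + t := by
          rw [← Nat.mul_succ]; congr 1; omega
        omega
      have e2 : k * t + t * k ≤ k * (t * t) := by
        have h2t : 2 * t ≤ t * t := Nat.mul_le_mul_right t ht2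
        calc k * t + t * k = k * (2 * t) := by ring
          _ ≤ k * (t * t) := Nat.mul_le_mul_left k h2t
      have e3 : k * (t * t) ≤ k * ∑ r ∈ Finset.range t, p ^ r :=
        Nat.mul_le_mul_left k (sq_le_sum_pow hp3 t)
      have hgoal : a * k - 2 = n := by omega
      rw [hgoal]
      omega
    · -- u ≥ 2
      have haa : p ^ t * 2 ≤ a := by rw [hu]; exact Nat.mul_le_mul_left _ hu2
      have hX : 3 * k ≤ p ^ t * k := Nat.mul_le_mul_right k hq3
      have h2X : p ^ t * 2 * k ≤ a * k := Nat.mul_le_mul_right k haa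
      have h1 : p ^ t * k + k ≤ a * k - 2 := by
        have : p ^ t * 2 * k = p ^ t * k + p ^ t * k := by ring
        omega
      calc k * t + padicValNat p (k !)
          ≤ (k * padicValNat p (p ^ t) + padicValNat p (k !)) + padicValNat p (k !) := by
            rw [padicValNat.prime_pow]; omega
        _ ≤ padicValNat p ((p ^ t * k)!) + padicValNat p (k !) := by
            have := vC0 (p := p) (a := p ^ t) (by positivity) k
            omega
        _ ≤ padicValNat p ((p ^ t * k + k)!) := vfact_add _ _
        _ ≤ padicValNat p ((a * k - 2)!) := vfact_mono h1

lemma vfact_sum (s : Finset ℕ) (f : ℕ → ℕ) :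
    ∑ j ∈ s, padicValNat p ((f j)!) ≤ padicValNat p ((∑ j ∈ s, f j)!) := by
  classical
  induction s using Finset.induction_on with
  | empty => simp
  | insert _ _ hnotmem ih =>
    rename_i a s'
    rw [Finset.sum_insert hnotmem, Finset.sum_insert hnotmem]
    calc padicValNat p ((f a)!) + ∑ j ∈ s', padicValNat p ((f j)!)
        ≤ padicValNat p ((f a)!) + padicValNat p ((∑ j ∈ s', f j)!) := by omega
      _ ≤ padicValNat p ((f a + ∑ j ∈ s', f j)!) := vfact_add _ _

lemma v_prod (s : Finset ℕ) (g : ℕ → ℕ) (hg : ∀ j ∈ s, g j ≠ 0) :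
    padicValNat p (∏ j ∈ s, g j) = ∑ j ∈ s, padicValNat p (g j) := by
  classical
  induction s using Finset.induction_on with
  | empty => simp
  | insert _ _ hnotmem ih =>
    rename_i a s'
    rw [Finset.prod_insert hnotmem, Finset.sum_insert hnotmem,
      padicValNat.mul (hg a (Finset.mem_insert_self a s'))
        (Finset.prod_ne_zero_iff.2 fun j hj => hg j (Finset.mem_insert_of_mem hj)),
      ih (fun j hj => hg j (Finset.mem_insert_of_mem hj))]
lemma main_ineq (hp3 : 3 ≤ p) (U : ℕ →₀ ℕ) (h0 : U 0 = 0)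
    (hex : ∃ j ∈ U.support, j ≠ p - 1) :
    padicValNat p (pGamma U) ≤ padicValNat p ((pWeight U + pDegree U - 2)!) := by
  classical
  obtain ⟨j0, hj0mem, hj0ne⟩ := hex
  set s := U.support with hs
  have hgamma : padicValNat p (pGamma U) =
      ∑ j ∈ s, (U j * padicValNat p (j + 1) + padicValNat p ((U j)!)) := by
    rw [pGamma, Finsupp.prod, v_prod _ _ (fun j hj => by positivity)]
    refine Finset.sum_congr rfl fun j hj => ?_
    rw [padicValNat.mul (by positivity) (Nat.factorial_ne_zero _),
      padicValNat.pow _ _]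
  have hN : pWeight U + pDegree U = ∑ j ∈ s, (j + 1) * U j := by
    rw [pWeight, pDegree, Finsupp.sum, Finsupp.sum, ← Finset.sum_add_distrib]
    exact Finset.sum_congr rfl fun j _ => by ring
  have hUj0 : 1 ≤ U j0 := Nat.one_le_iff_ne_zero.2 (Finsupp.mem_support_iff.1 hj0mem)
  have hj0pos : 1 ≤ j0 := by
    rcases Nat.eq_zero_or_pos j0 with h | h
    · rw [h] at hUj0; omega
    · exact h
  set A := (j0 + 1) * U j0 with hA
  set R := ∑ j ∈ s.erase j0, (j + 1) * U j with hR
  have hsplit : ∑ j ∈ s, (j + 1) * U j = A + R :=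
    (Finset.add_sum_erase s _ hj0mem).symm
  have hstar2 : 2 ≤ A := by
    calc 2 = 2 * 1 := by norm_num
      _ ≤ (j0 + 1) * U j0 := Nat.mul_le_mul (by omega) hUj0
  have hC : U j0 * padicValNat p (j0 + 1) + padicValNat p ((U j0)!)
      ≤ padicValNat p ((A - 2)!) := by
    have hap : j0 + 1 ≠ p := by intro h; apply hj0ne; omega
    have := claimC hp3 (a := j0 + 1) (k := U j0) (by omega) hap hUj0
    rwa [hA]
  have hrest : ∑ j ∈ s.erase j0, (U j * padicValNat p (j + 1) + padicValNat p ((U j)!))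
      ≤ padicValNat p (R !) := by
    calc ∑ j ∈ s.erase j0, (U j * padicValNat p (j + 1) + padicValNat p ((U j)!))
        ≤ ∑ j ∈ s.erase j0, padicValNat p (((j + 1) * U j)!) :=
          Finset.sum_le_sum fun j hj => vC0 (by omega) (U j)
      _ ≤ padicValNat p (R !) := vfact_sum _ _
  have harg : pWeight U + pDegree U - 2 = (A - 2) + R := by
    rw [hN, hsplit]; omega
  calc padicValNat p (pGamma U)
      = (U j0 * padicValNat p (j0 + 1) + padicValNat p ((U j0)!)) +
        ∑ j ∈ s.erase j0, (U j * padicValNat p (j + 1) + padicValNat p ((U j)!)) := by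
        rw [hgamma, ← Finset.add_sum_erase s (fun j => U j * padicValNat p (j + 1) + padicValNat p ((U j)!)) hj0mem]
    _ ≤ padicValNat p ((A - 2)!) + padicValNat p (R !) := Nat.add_le_add hC hrest
    _ ≤ padicValNat p (((A - 2) + R)!) := vfact_add _ _
    _ = padicValNat p ((pWeight U + pDegree U - 2)!) := by rw [harg]

end Helpers

/-- For an odd prime p and m ≥ 2 with m ≢ 0 mod (p-1), p does not divide the denominator
of B̂_m/m: every nonzero coefficient of Q_m has nonnegative p-adic valuation. -/
theorem p_integrality (p : ℕ) (hp : p.Prime) (hodd : p ≠ 2) (m : ℕ) (hm : 2 ≤ m)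
    (hmod : ¬ m ≡ 0 [MOD p - 1]) :
    ∀ v : ℕ →₀ ℕ, (Q m).coeff v ≠ 0 → 0 ≤ padicValRat p ((Q m).coeff v) := by
  classical
  haveI : Fact p.Prime := ⟨hp⟩
  have hp3 : 3 ≤ p := by
    have h2 := hp.two_le
    rcases Nat.lt_or_ge p 3 with h | h
    · interval_cases p <;> simp_all
    · exact h
  intro v hv
  -- the set of monomials is a finite set
  have key : ∀ U : ℕ →₀ ℕ, U 0 = 0 → pWeight U = m →
      ∀ j ∈ U.support, j ≤ m ∧ U j ≤ m := by
    intro U h0 hw j hj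
    have hUj : U j ≠ 0 := Finsupp.mem_support_iff.1 hj
    have hj0 : j ≠ 0 := fun h => hUj (h ▸ h0)
    have hterm : j * U j ≤ pWeight U := by
      rw [pWeight, Finsupp.sum]
      exact Finset.single_le_sum (f := fun j => j * U j) (fun i _ => Nat.zero_le _) hj
    rw [hw] at hterm
    constructor
    · calc j = j * 1 := by ring
        _ ≤ j * U j := Nat.mul_le_mul_left j (by omega)
        _ ≤ m := hterm
    · calc U j = 1 * U j := by ring
        _ ≤ j * U j := Nat.mul_le_mul_right _ (by omega)
        _ ≤ m := hterm
  set T : Finset (ℕ →₀ ℕ) :=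
    ((Finset.range (m+1)).finsupp (fun _ => Finset.range (m+1))).filter
      (fun U => U 0 = 0 ∧ pWeight U = m) with hT
  have hST : {U : ℕ →₀ ℕ | U 0 = 0 ∧ pWeight U = m} = ↑T := by
    ext U
    simp only [hT, Set.mem_setOf_eq, Finset.coe_filter, Finset.mem_finsupp_iff]
    constructor
    · rintro ⟨h0, hw⟩
      refine ⟨⟨fun j hj => Finset.mem_range.2 ?_, fun i _ => Finset.mem_range.2 ?_⟩, h0, hw⟩
      · exact Nat.lt_succ_of_le (key U h0 hw j hj).1
      · rcases Nat.eq_zero_or_pos (U i) with h | h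
        · omega
        · exact Nat.lt_succ_of_le
            (key U h0 hw i (Finsupp.mem_support_iff.2 (by omega))).2
    · tauto
  have hQ : Q m = ∑ U ∈ T, monomial U (pTau U) := by
    rw [Q, hST, finsum_mem_coe_finset]
  have hcoeff : (Q m).coeff v = if v ∈ T then pTau v else 0 := by
    rw [hQ, coeff_sum]
    simp only [coeff_monomial]
    exact Finset.sum_ite_eq' T v pTau
  rw [hcoeff] at hv ⊢
  by_cases hvT : v ∈ T
  swap
  · rw [if_neg hvT] at hv; exact absurd rfl hv
  rw [if_pos hvT] at hv ⊢
  obtain ⟨-, hv0, hvw⟩ := Finset.mem_filter.1 hvT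
  have hex : ∃ j ∈ v.support, j ≠ p - 1 := by
    by_contra h
    push_neg at h
    apply hmod
    refine (Nat.modEq_zero_iff_dvd).2 ?_
    rw [← hvw, pWeight, Finsupp.sum]
    exact Finset.dvd_sum fun j hj => by rw [h j hj]; exact Dvd.dvd.mul_right dvd_rfl _
  have hineq := main_ineq hp3 v hv0 hex
  have hG : pGamma v ≠ 0 := by
    rw [pGamma, Finsupp.prod]
    exact Finset.prod_ne_zero_iff.2 fun j hj => by positivity
  have hGQ : (pGamma v : ℚ) ≠ 0 := Nat.cast_ne_zero.2 hG
  have hF : ((pWeight v + pDegree v - 2)! : ℚ) ≠ 0 :=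
    Nat.cast_ne_zero.2 (Nat.factorial_ne_zero _)
  have hnum : ((-1 : ℚ)) ^ (pDegree v - 1) * ((pWeight v + pDegree v - 2)! : ℚ) ≠ 0 :=
    mul_ne_zero (pow_ne_zero _ (by norm_num)) hF
  rw [pTau, padicValRat.div hnum hGQ]
  have hsign : padicValRat p ((-1 : ℚ) ^ (pDegree v - 1) *
      ((pWeight v + pDegree v - 2)! : ℚ)) =
      padicValRat p (((pWeight v + pDegree v - 2)! : ℚ)) := by
    rcases Nat.even_or_odd (pDegree v - 1) with he | he
    · rw [he.neg_one_pow, one_mul]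
    · rw [he.neg_one_pow, neg_one_mul, padicValRat.neg]
  rw [hsign, padicValRat.of_nat, padicValRat.of_nat]
  rw [sub_nonneg]
  exact_mod_cast hineq

end
end

section
/- Let n ≥ 3 be an odd integer. Then Q_n − (c_1^n + c_1^{n−3}·c_3)/2 lies in ℤ[c_1, c_2, c_3, …]; that is, every coefficient of the polynomial Q_n − (1/2)·c_1^n − (1/2)·c_1^{n−3}·c_3 is an integer. (This is the odd case of the universal von Staudt theorem: B̂_n/n ≡ (c_1^n + c_1^{n−3} c_3)/2 mod ℤ[c_1, c_2, …] for odd n ≥ 3.) -/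
open Nat MvPolynomial

noncomputable section

namespace VSAux

variable {p : ℕ} [hp : Fact p.Prime]

lemma vp_le_of_dvd {a b : ℕ} (h : a ∣ b) (hb : b ≠ 0) :
    padicValNat p a ≤ padicValNat p b := by
  obtain ⟨c, rfl⟩ := h
  have ha : a ≠ 0 := by rintro rfl; simp at hb
  have hc : c ≠ 0 := by rintro rfl; simp at hb
  rw [padicValNat.mul ha hc]
  exact Nat.le_add_right _ _

lemma vp_fact_le {a b : ℕ} (h : a ≤ b) :
    padicValNat p (a !) ≤ padicValNat p (b !) :=
  vp_le_of_dvd (Nat.factorial_dvd_factorial h) (Nat.factorial_ne_zero b)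

lemma vp_pow_mul_fact (e t : ℕ) :
    padicValNat p ((p ^ e * t)!) = (∑ i ∈ Finset.range e, p ^ i) * t + padicValNat p (t !) := by
  induction e generalizing t with
  | zero => simp
  | succ e ih =>
    have h1 : p ^ (e + 1) * t = p ^ e * (p * t) := by ring
    rw [h1, ih (p * t), padicValNat_factorial_mul, Finset.sum_range_succ']
    have : ∀ x, p ^ (x+1) = p^x * p := fun x => pow_succ p x
    simp only [this, ← Finset.sum_mul]
    ring

lemma vp_lt_self {m : ℕ} (hm : m ≠ 0) : padicValNat p m < m :=
  lt_of_lt_of_le (Nat.lt_pow_self hp.out.one_lt)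
    (Nat.le_of_dvd (Nat.pos_of_ne_zero hm) pow_padicValNat_dvd)

lemma vp_fact_ge_div (k : ℕ) : k / p ≤ padicValNat p (k !) := by
  have h1 : p * (k / p) ≤ k := Nat.mul_div_le k p
  calc k / p ≤ padicValNat p ((k/p)!) + (k/p) := Nat.le_add_left _ _
    _ = padicValNat p ((p * (k/p))!) := (padicValNat_factorial_mul _).symm
    _ ≤ padicValNat p (k !) := vp_fact_le h1

lemma vp_delta (c m : ℕ) (hc : c ≠ 0) :
    padicValNat p c * m + padicValNat p (m !) ≤ padicValNat p ((c * m)!) := by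
  set e := padicValNat p c with he
  set u := c / p ^ e with hu
  have hcu : p ^ e * u = c := Nat.ordProj_mul_ordCompl_eq_self c p ▸ by
    rw [hu, he, Nat.factorization_def c hp.out]
  have hu1 : 1 ≤ u := by
    rcases Nat.eq_zero_or_pos u with h | h
    · exfalso; rw [h, mul_zero] at hcu; exact hc hcu.symm
    · exact h
  have h2 : c * m = p ^ e * (u * m) := by rw [← hcu]; ring
  rw [h2, vp_pow_mul_fact]
  have hS : e ≤ ∑ i ∈ Finset.range e, p ^ i := by
    calc e = ∑ _i ∈ Finset.range e, 1 := by simp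
      _ ≤ _ := Finset.sum_le_sum fun i _ => Nat.one_le_pow _ _ hp.out.pos
  have : e * m ≤ (∑ i ∈ Finset.range e, p ^ i) * (u * m) := by
    calc e * m ≤ (∑ i ∈ Finset.range e, p ^ i) * m := Nat.mul_le_mul_right _ hS
      _ ≤ _ := by
        rw [← mul_assoc]
        exact Nat.mul_le_mul_right m (Nat.le_mul_of_pos_right _ hu1)
  exact Nat.add_le_add this (vp_fact_le (Nat.le_mul_of_pos_left m hu1))


lemma vp_prod {ι : Type*} (s : Finset ι) (f : ι → ℕ) (hf : ∀ i ∈ s, f i ≠ 0) :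
    padicValNat p (∏ i ∈ s, f i) = ∑ i ∈ s, padicValNat p (f i) := by
  classical
  induction s using Finset.induction_on with
  | empty => simp
  | insert a s' hnot ih =>
    rw [Finset.prod_insert hnot, Finset.sum_insert hnot,
      padicValNat.mul (hf a (Finset.mem_insert_self a s'))
        (Finset.prod_ne_zero_iff.2 fun i hi => hf i (Finset.mem_insert_of_mem hi)),
      ih fun i hi => hf i (Finset.mem_insert_of_mem hi)]

-- numeric helpers
lemma geom_ge_two_mul {e : ℕ} (hp3 : 3 ≤ p) (he : 2 ≤ e) :
    2 * e ≤ ∑ i ∈ Finset.range e, p ^ i := by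
  induction e, he using Nat.le_induction with
  | base =>
    rw [Finset.sum_range_succ, Finset.sum_range_one]
    have h0 : p ^ 0 = 1 := pow_zero p
    have h1 : p ^ 1 = p := pow_one p
    omega
  | succ e he ih =>
    have h2 : 2 ≤ p ^ e := le_trans (by omega) (Nat.le_self_pow (by omega) p)
    rw [Finset.sum_range_succ]
    omega

lemma geom_two_ge {e : ℕ} (he : 3 ≤ e) :
    2 * e + 1 ≤ ∑ i ∈ Finset.range e, (2:ℕ) ^ i := by
  induction e, he using Nat.le_induction with
  | base => decide
  | succ e he ih =>
    have h2 : 2 ≤ (2:ℕ) ^ e := Nat.le_self_pow (by omega) 2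
    rw [Finset.sum_range_succ]
    omega

lemma two_pow_ge_add_two {v : ℕ} (hv : 2 ≤ v) : v + 2 ≤ 2 ^ v := by
  induction v, hv using Nat.le_induction with
  | base => decide
  | succ v hv ih =>
    have h2 : 1 ≤ (2:ℕ) ^ v := Nat.one_le_two_pow
    rw [pow_succ]
    omega

lemma v2_add_two_le {m : ℕ} (hm : 3 ≤ m) : padicValNat 2 m + 2 ≤ m := by
  haveI : Fact (Nat.Prime 2) := ⟨Nat.prime_two⟩
  set v := padicValNat 2 m with hv
  have hdvd : 2 ^ v ≤ m := Nat.le_of_dvd (by omega) pow_padicValNat_dvd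
  rcases Nat.lt_or_ge v 2 with h | h
  · omega
  · exact le_trans (two_pow_ge_add_two h) hdvd

lemma pw_succ_ge {w : ℕ} (hp2 : 2 ≤ p) (hne : ¬(p = 2 ∧ w = 2)) :
    (p + 1) * w ≤ p ^ w + 1 := by
  rcases Nat.lt_or_ge p 3 with h2 | h3
  · have hp2' : p = 2 := by omega
    subst hp2'
    rcases Nat.lt_or_ge w 3 with h | h
    · interval_cases w
      · omega
      · omega
      · exact absurd ⟨rfl, rfl⟩ hne
    · clear hne
      induction w, h using Nat.le_induction with
      | base => decide
      | succ w hw ih =>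
        have h2 : 3 ≤ (2:ℕ) ^ w := le_trans (by norm_num) (Nat.pow_le_pow_right (by omega) hw)
        rw [pow_succ]
        omega
  · clear hne
    induction w with
    | zero => omega
    | succ w ih =>
      rcases Nat.eq_zero_or_pos w with rfl | hw1
      · have h1 : p ^ (0+1) = p := pow_one p
        have hexp : (p+1)*(0+1) = p + 1 := by ring
        omega
      · have hpw : p ≤ p ^ w := Nat.le_self_pow (by omega) p
        have hstep : p ^ w + p + 1 ≤ p ^ (w+1) := by
          rw [pow_succ]
          nlinarith
        have hexp : (p+1)*(w+1) = (p+1)*w + (p+1) := by ring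
        omega

lemma add_le_mul_add_one {e m : ℕ} (he : 1 ≤ e) (hm : 1 ≤ m) : e + m ≤ e * m + 1 := by
  nlinarith


lemma geom_ge_e (e : ℕ) : e ≤ ∑ i ∈ Finset.range e, p ^ i := by
  calc e = ∑ _i ∈ Finset.range e, 1 := by simp
    _ ≤ _ := Finset.sum_le_sum fun i _ => Nat.one_le_pow _ _ hp.out.pos

lemma pivot_vp {c m : ℕ} (hcp : p < c) (hm : 1 ≤ m)
    (hex : ¬(p = 2 ∧ c = 4) ∨ 3 ≤ m) :
    padicValNat p c * m + padicValNat p (m !) ≤ padicValNat p ((c * m - 2)!) := by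
  have hp2 : 2 ≤ p := hp.out.two_le
  have hc3 : 3 ≤ c := by omega
  have hcm : c ≤ c * m := Nat.le_mul_of_pos_right c hm
  have hX3 : 3 ≤ c * m := le_trans hc3 hcm
  obtain ⟨y, hy⟩ : ∃ y, c * m = y + 3 := ⟨c*m - 3, by omega⟩
  have hkey : padicValNat p ((c*m)!) =
      padicValNat p (c*m) + padicValNat p (y+2) + padicValNat p ((y+1)!) := by
    conv_lhs => rw [hy]
    have e2 : (y+2)! = (y+2) * (y+1)! := by
      rw [show y+2 = (y+1)+1 by omega]
      exact Nat.factorial_succ _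
    have e3 : (y+3)! = (y+3) * (y+2)! := by
      rw [show y+3 = (y+2)+1 by omega]
      exact Nat.factorial_succ _
    have h1 : (y+3)! = (y+3) * ((y+2) * (y+1)!) := by rw [e3, e2]
    rw [h1, padicValNat.mul (by omega) (by positivity),
      padicValNat.mul (by omega) (by positivity), ← hy]
    ring
  have hsub : c * m - 2 = y + 1 := by omega
  rw [hsub]
  set e := padicValNat p c with he
  rcases Nat.eq_zero_or_pos (padicValNat p (c*m)) with hv0 | hv1
  · -- case B : p does not divide c*m
    have hvsplit : padicValNat p c + padicValNat p m = 0 := by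
      rw [← padicValNat.mul (by omega) (by omega)]; exact hv0
    have he0 : e = 0 := by omega
    obtain ⟨b, hb⟩ : ∃ b, c = b + 1 := ⟨c - 1, by omega⟩
    have hb2 : 2 ≤ b := by omega
    have heq : m + b*m = c * m := by rw [hb]; ring
    have hchain : padicValNat p (m !) + padicValNat p ((b * m)!) ≤ padicValNat p ((c*m)!) := by
      have hdvd : m ! * ((b*m)!) ∣ (m + b*m)! := Nat.factorial_mul_factorial_dvd_factorial_add _ _
      rw [heq] at hdvd
      calc padicValNat p (m !) + padicValNat p ((b * m)!)
          = padicValNat p (m ! * (b*m)!) := (padicValNat.mul (by positivity) (by positivity)).symm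
        _ ≤ _ := vp_le_of_dvd hdvd (by positivity)
    set w := padicValNat p (y+2) with hw
    have hbm2 : 2 * m ≤ b * m := Nat.mul_le_mul_right m hb2
    have hwle : w ≤ padicValNat p ((b*m)!) := by
      rcases Nat.eq_zero_or_pos w with h0 | h1
      · omega
      · have hpw : p ^ w ≤ y + 2 := Nat.le_of_dvd (by omega) pow_padicValNat_dvd
        have hgoal : p * w ≤ b * m := by
          rcases Classical.em (p = 2 ∧ w = 2) with h22 | hne
          · obtain ⟨hp2', hw2⟩ := h22
            have h4 : (4:ℕ) ≤ y + 2 := by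
              have h40 : (2:ℕ)^2 = 4 := by norm_num
              rw [hp2', hw2, h40] at hpw
              exact hpw
            rw [hp2', hw2]
            omega
          · have h5 : (p+1)*w ≤ p ^ w + 1 := pw_succ_ge hp2 hne
            have h7 : p ^ w + 1 ≤ c * m := by omega
            have hpb : p ≤ b := by omega
            have h6 : p * (c*m) ≤ (p+1) * (b*m) := by
              have e1 : p * (c*m) = p*(b*m) + p*m := by rw [hb]; ring
              have e2 : (p+1) * (b*m) = p*(b*m) + b*m := by ring
              have e3 : p * m ≤ b * m := Nat.mul_le_mul_right m hpb
              omega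
            have h8 : (p+1) * (p*w) ≤ (p+1) * (b*m) := by
              calc (p+1) * (p*w) = p * ((p+1)*w) := by ring
                _ ≤ p * (p^w + 1) := Nat.mul_le_mul_left p h5
                _ ≤ p * (c*m) := Nat.mul_le_mul_left p h7
                _ ≤ _ := h6
            exact Nat.le_of_mul_le_mul_left h8 (by omega)
        calc w ≤ b*m / p := (Nat.le_div_iff_mul_le (by omega)).2 (by rw [mul_comm]; exact hgoal)
          _ ≤ _ := vp_fact_ge_div _
    have hem : e * m = 0 := by rw [he0, zero_mul]
    omega
  · -- case A : p divides c*m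
    have hpdvd : p ∣ c * m := dvd_trans (dvd_pow_self p (by omega)) 
      (dvd_trans (pow_dvd_pow p hv1) pow_padicValNat_dvd)
    have hw0 : padicValNat p (y+2) = 0 := by
      apply padicValNat.eq_zero_of_not_dvd
      intro hdvd2
      have : p ∣ 1 := by
        have := Nat.dvd_sub (hy ▸ hpdvd) hdvd2
        simpa using this
      have := Nat.le_of_dvd one_pos this
      omega
    have hsplit : padicValNat p (c * m) = e + padicValNat p m := by
      rw [padicValNat.mul (by omega) (by omega)]
    suffices h : e*m + padicValNat p (m !) + padicValNat p (c*m) ≤ padicValNat p ((c*m)!) by omega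
    rcases Nat.eq_zero_or_pos e with he0 | he1
    · -- e = 0, so p ∣ m
      have hvm1 : 1 ≤ padicValNat p m := by omega
      have hpm : p ∣ m := dvd_trans (dvd_pow_self p (by omega))
        (dvd_trans (pow_dvd_pow p hvm1) pow_padicValNat_dvd)
      have hm2 : 2 ≤ m := le_trans hp2 (Nat.le_of_dvd (by omega) hpm)
      have hdvd : m ! * m ∣ (c*m)! := by
        have d1 : m ! * m ∣ m ! * m ! := mul_dvd_mul_left _ (Nat.dvd_factorial (by omega) le_rfl)
        have d2 : m ! * m ! ∣ (m + m)! := Nat.factorial_mul_factorial_dvd_factorial_add _ _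
        have d3 : (m + m)! ∣ (c * m)! := Nat.factorial_dvd_factorial (by nlinarith)
        exact d1.trans (d2.trans d3)
      have := vp_le_of_dvd (p := p) hdvd (by positivity)
      rw [padicValNat.mul (by positivity) (by omega)] at this
      have hem : e * m = 0 := by rw [he0, zero_mul]
      omega
    · -- e ≥ 1
      set u := c / p ^ e with hu
      have hcu : p ^ e * u = c := by
        have h0 := Nat.ordProj_mul_ordCompl_eq_self c p
        rwa [Nat.factorization_def c hp.out, ← he, ← hu] at h0
      have hu1 : 1 ≤ u := by
        rcases Nat.eq_zero_or_pos u with h | h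
        · exfalso; rw [h, mul_zero] at hcu; omega
        · exact h
      have hXrw : c * m = p ^ e * (u * m) := by rw [← hcu]; ring
      set S := ∑ i ∈ Finset.range e, p ^ i with hS
      have hvfact : padicValNat p ((c*m)!) = S * (u*m) + padicValNat p ((u*m)!) := by
        rw [hXrw, vp_pow_mul_fact]
      have hvum : padicValNat p (m !) ≤ padicValNat p ((u*m)!) :=
        vp_fact_le (Nat.le_mul_of_pos_left m hu1)
      have hSe : e ≤ S := geom_ge_e e
      have hvm : padicValNat p m + 1 ≤ m := vp_lt_self (by omega)
      have hkey2 : e + m ≤ e*m + 1 := add_le_mul_add_one he1 hm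
      suffices harith : e*m + e + padicValNat p m ≤ S * (u*m) by omega
      rcases Nat.lt_or_ge u 2 with hu2 | hu2
      · -- u = 1 : c = p ^ e
        have hu1' : u = 1 := by omega
        have hcpe : c = p ^ e := by rw [← hcu, hu1', mul_one]
        have hum : u * m = m := by rw [hu1', one_mul]
        rw [hum]
        have he2 : 2 ≤ e := by
          by_contra hlt
          have he1' : e = 1 := by omega
          rw [hcpe, he1', pow_one] at hcp
          omega
        rcases Nat.lt_or_ge p 3 with hp3 | hp3
        · -- p = 2
          have hp2' : p = 2 := by omega
          rcases Nat.lt_or_ge e 3 with he3 | he3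
          · -- e = 2, c = 4, need m ≥ 3
            have he2' : e = 2 := by omega
            have hc4 : c = 4 := by rw [hcpe, he2', hp2']; norm_num
            have hm3 : 3 ≤ m := by
              rcases hex with hcon | hm3
              · exact absurd ⟨hp2', hc4⟩ hcon
              · exact hm3
            have hv2 : padicValNat p m + 2 ≤ m := by rw [hp2']; exact v2_add_two_le hm3
            have hS3 : S = 3 := by
              rw [hS, he2', hp2']
              decide
            rw [hS3, he2']
            have : 3 * m = 2*m + m := by ring
            omega
          · -- e ≥ 3
            have hS3 : 2*e + 1 ≤ S := by
              rw [hS, hp2']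
              exact geom_two_ge he3
            have hmul : (2*e+1) * m ≤ S * m := Nat.mul_le_mul_right m hS3
            have hexp : (2*e+1) * m = e*m + e*m + m := by ring
            -- goal : e*m + e + v ≤ S*m ; have e + v ≤ e*m + m - 1 ... 
            omega
        · -- p ≥ 3
          have hS2 : 2*e ≤ S := geom_ge_two_mul hp3 he2
          have hmul : (2*e) * m ≤ S * m := Nat.mul_le_mul_right m hS2
          have hexp : (2*e) * m = e*m + e*m := by ring
          omega
      · -- u ≥ 2
        have hmul : e * (2*m) ≤ S * (u*m) := Nat.mul_le_mul hSe (Nat.mul_le_mul_right m hu2)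
        have hexp : e * (2*m) = e*m + e*m := by ring
        omega


lemma pgamma_ne_zero (U : ℕ →₀ ℕ) : pGamma U ≠ 0 := by
  rw [pGamma, Finsupp.prod]
  apply Finset.prod_ne_zero_iff.2
  intro j _
  positivity

lemma weight_add_degree (U : ℕ →₀ ℕ) :
    pWeight U + pDegree U = ∑ j ∈ U.support, (j+1) * U j := by
  rw [pWeight, pDegree, Finsupp.sum, Finsupp.sum, ← Finset.sum_add_distrib]
  apply Finset.sum_congr rfl
  intro j _
  ring

lemma vp_gamma (U : ℕ →₀ ℕ) :
    padicValNat p (pGamma U) =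
      ∑ j ∈ U.support, (padicValNat p (j+1) * U j + padicValNat p ((U j)!)) := by
  rw [pGamma, Finsupp.prod, vp_prod _ _ (fun j _ => by positivity)]
  apply Finset.sum_congr rfl
  intro j _
  rw [padicValNat.mul (by positivity) (by positivity), padicValNat.pow _ _,
    mul_comm]

lemma route_pivot (U : ℕ →₀ ℕ) (j' : ℕ) (hj' : j' ∈ U.support) (hgt : p < j' + 1)
    (hex : ¬(p = 2 ∧ j' + 1 = 4) ∨ 3 ≤ U j') :
    padicValNat p (pGamma U) ≤ padicValNat p ((pWeight U + pDegree U - 2)!) := by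
  set N := pWeight U + pDegree U with hNdef
  have hN : N = ∑ j ∈ U.support, (j+1) * U j := weight_add_degree U
  have hm1 : 1 ≤ U j' := Nat.pos_of_ne_zero (Finsupp.mem_support_iff.1 hj')
  have hp2 : 2 ≤ p := hp.out.two_le
  have hX : 2 ≤ (j'+1) * U j' := by
    have := Nat.le_mul_of_pos_right (j'+1) hm1
    omega
  have hNsplit : N = (j'+1) * U j' + ∑ j ∈ U.support.erase j', (j+1) * U j := by
    rw [hN, ← Finset.add_sum_erase _ _ hj']
  have hdvd : (((j'+1) * U j' - 2)! * ∏ j ∈ U.support.erase j', (((j+1) * U j)!)) ∣ (N - 2)! := by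
    calc (((j'+1) * U j' - 2)! * ∏ j ∈ U.support.erase j', (((j+1) * U j)!))
        ∣ ((j'+1) * U j' - 2)! * (∑ j ∈ U.support.erase j', (j+1) * U j)! :=
          mul_dvd_mul_left _ (Nat.prod_factorial_dvd_factorial_sum _ _)
      _ ∣ (((j'+1) * U j' - 2) + ∑ j ∈ U.support.erase j', (j+1) * U j)! :=
          Nat.factorial_mul_factorial_dvd_factorial_add _ _
      _ = (N - 2)! := by
          congr 1
          omega
  have hle := vp_le_of_dvd (p := p) hdvd (Nat.factorial_ne_zero _)
  rw [padicValNat.mul (Nat.factorial_ne_zero _)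
      (Finset.prod_ne_zero_iff.2 fun j _ => Nat.factorial_ne_zero _),
    vp_prod _ _ (fun j _ => Nat.factorial_ne_zero _)] at hle
  rw [vp_gamma, ← Finset.add_sum_erase _ _ hj']
  have hpiece : ∑ j ∈ U.support.erase j', (padicValNat p (j+1) * U j + padicValNat p ((U j)!))
      ≤ ∑ j ∈ U.support.erase j', padicValNat p (((j+1) * U j)!) :=
    Finset.sum_le_sum fun j _ => vp_delta (j+1) (U j) (by omega)
  have hpivot : padicValNat p (j'+1) * U j' + padicValNat p ((U j')!) ≤
      padicValNat p (((j'+1) * (U j') - 2)!) := pivot_vp hgt hm1 hex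
  exact le_trans (Nat.add_le_add hpivot hpiece) hle

lemma route_small (hpodd : p ≠ 2) (U : ℕ →₀ ℕ) (hU0 : U 0 = 0)
    (hnodd : Odd (pWeight U)) (hall : ∀ j ∈ U.support, j + 1 ≤ p) :
    padicValNat p (pGamma U) ≤ padicValNat p ((pWeight U + pDegree U - 2)!) := by
  have hp2 : 2 ≤ p := hp.out.two_le
  set N := pWeight U + pDegree U with hNdef
  have hN : N = ∑ j ∈ U.support, (j+1) * U j := weight_add_degree U
  set s := U.support.erase (p-1) with hs
  set t := U (p-1) with ht
  set A := ∑ j ∈ s, (j+1) * U j with hA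
  set dA := ∑ j ∈ s, U j with hdA
  have hvj0 : ∀ j ∈ s, padicValNat p (j+1) = 0 := by
    intro j hj
    have hj1 : j ≠ p - 1 := Finset.ne_of_mem_erase hj
    have hj2 : j + 1 ≤ p := hall j (Finset.mem_of_mem_erase hj)
    apply padicValNat.eq_zero_of_not_dvd
    intro hdvd
    have := Nat.le_of_dvd (by omega) hdvd
    omega
  have hNA : N = A + p * t := by
    by_cases hmem : p - 1 ∈ U.support
    · rw [hN, ← Finset.add_sum_erase _ _ hmem, ← hs, ← hA]
      have : (p - 1 + 1) = p := by omega
      rw [this]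
      ring
    · have ht0 : t = 0 := by
        rw [ht]; exact Finsupp.notMem_support_iff.1 hmem
      rw [hN, ht0, mul_zero, add_zero, hA, hs, Finset.erase_eq_of_notMem hmem]
  have hsplit : padicValNat p (pGamma U) ≤
      (t + padicValNat p (t !)) + ∑ j ∈ s, padicValNat p ((U j)!) := by
    rw [vp_gamma]
    by_cases hmem : p - 1 ∈ U.support
    · rw [← Finset.add_sum_erase _ _ hmem, ← hs]
      have h1 : padicValNat p (p - 1 + 1) = 1 := by
        have : p - 1 + 1 = p := by omega
        rw [this, padicValNat.self hp.out.one_lt]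
      apply Nat.add_le_add
      · rw [h1, one_mul, ← ht]
      · apply Finset.sum_le_sum
        intro j hj
        rw [hvj0 j hj, zero_mul, zero_add]
    · have ht0 : t = 0 := by
        rw [ht]; exact Finsupp.notMem_support_iff.1 hmem
      rw [hs, Finset.erase_eq_of_notMem hmem, ht0]
      simp only [Nat.factorial_zero, padicValNat.one, add_zero, zero_add]
      apply Finset.sum_le_sum
      intro j hj
      have hj' : j ∈ s := by rw [hs, Finset.erase_eq_of_notMem hmem]; exact hj
      rw [hvj0 j hj', zero_mul, zero_add]
  -- s is nonempty
  have hsne : s.Nonempty := by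
    by_contra hne
    rw [Finset.not_nonempty_iff_eq_empty] at hne
    have hsupp : U.support ⊆ {p-1} := by
      intro j hj
      rcases Classical.em (j = p - 1) with h | h
      · simp [h]
      · exfalso
        have : j ∈ s := Finset.mem_erase.2 ⟨h, hj⟩
        rw [hne] at this
        exact absurd this (Finset.notMem_empty j)
    have hW : pWeight U = (p-1) * t := by
      rw [pWeight, Finsupp.sum]
      rcases Finset.subset_singleton_iff.1 hsupp with h | h
      · rw [h, Finset.sum_empty]
        have : t = 0 := by
          rw [ht]
          apply Finsupp.notMem_support_iff.1
          rw [h]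
          exact Finset.notMem_empty _
        rw [this, mul_zero]
      · rw [h, Finset.sum_singleton, ← ht]
    have hpe : Even (p - 1) := by
      have : Odd p := hp.out.odd_of_ne_two hpodd
      rcases this with ⟨k, hk⟩
      exact ⟨k, by omega⟩
    rw [hW] at hnodd
    rcases hpe with ⟨k, hk⟩
    rcases hnodd with ⟨l, hl⟩
    have h1 : (p-1)*t = (k+k)*t := by rw [← hk]
    have h2 : (k+k)*t = 2*(k*t) := by ring
    omega
  have hA2 : 2 ≤ A := by
    obtain ⟨j₀, hj₀⟩ := hsne
    have hj1 : 1 ≤ j₀ := by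
      rcases Nat.eq_zero_or_pos j₀ with h | h
      · exfalso
        have : j₀ ∈ U.support := Finset.mem_of_mem_erase hj₀
        rw [Finsupp.mem_support_iff] at this
        rw [h] at this
        exact this hU0
      · exact h
    have hm : 1 ≤ U j₀ := by
      have : j₀ ∈ U.support := Finset.mem_of_mem_erase hj₀
      exact Nat.pos_of_ne_zero (Finsupp.mem_support_iff.1 this)
    have hterm : (j₀+1) * U j₀ ≤ A := by
      rw [hA]
      exact Finset.single_le_sum (f := fun j => (j+1) * U j) (fun i _ => Nat.zero_le _) hj₀
    have h2t : 2 ≤ (j₀+1) * U j₀ := by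
      have := Nat.le_mul_of_pos_right (j₀+1) hm
      omega
    omega
  have h2d : 2 * dA ≤ A := by
    rw [hdA, hA, Finset.mul_sum]
    apply Finset.sum_le_sum
    intro j hj
    have hj1 : 1 ≤ j := by
      rcases Nat.eq_zero_or_pos j with h | h
      · exfalso
        have hjs : j ∈ U.support := Finset.mem_of_mem_erase hj
        rw [Finsupp.mem_support_iff] at hjs
        rw [h] at hjs
        exact hjs hU0
      · exact h
    exact Nat.mul_le_mul_right _ (by omega)
  -- divisibilities
  have dvd1 : (∏ j ∈ s, ((U j)!)) ∣ dA ! := Nat.prod_factorial_dvd_factorial_sum _ _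
  have dvd2 : dA ! ∣ (A - 2)! := by
    rcases Nat.lt_or_ge dA 2 with h | h
    · have : dA ! = 1 := by interval_cases dA <;> rfl
      rw [this]
      exact one_dvd _
    · exact Nat.factorial_dvd_factorial (by omega)
  have dvd3 : ((A-2)! * (p*t)!) ∣ (N - 2)! := by
    have heq : (A - 2) + p * t = N - 2 := by omega
    calc ((A-2)! * (p*t)!) ∣ ((A-2) + p*t)! := Nat.factorial_mul_factorial_dvd_factorial_add _ _
      _ = (N-2)! := by rw [heq]
  have hle := vp_le_of_dvd (p := p) dvd3 (Nat.factorial_ne_zero _)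
  rw [padicValNat.mul (Nat.factorial_ne_zero _) (Nat.factorial_ne_zero _),
    padicValNat_factorial_mul] at hle
  have hsum : ∑ j ∈ s, padicValNat p ((U j)!) ≤ padicValNat p ((A-2)!) := by
    calc ∑ j ∈ s, padicValNat p ((U j)!)
        = padicValNat p (∏ j ∈ s, ((U j)!)) := (vp_prod _ _ (fun j _ => Nat.factorial_ne_zero _)).symm
      _ ≤ padicValNat p (dA !) := vp_le_of_dvd (p := p) dvd1 (Nat.factorial_ne_zero _)
      _ ≤ _ := vp_le_of_dvd (p := p) dvd2 (Nat.factorial_ne_zero _)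
  calc padicValNat p (pGamma U)
      ≤ (t + padicValNat p (t !)) + ∑ j ∈ s, padicValNat p ((U j)!) := hsplit
    _ ≤ (t + padicValNat p (t !)) + padicValNat p ((A-2)!) := Nat.add_le_add_left hsum _
    _ = padicValNat p ((A-2)!) + (padicValNat p (t !) + t) := by ring
    _ ≤ _ := hle


lemma weight_13 (U : ℕ →₀ ℕ) (hsupp : U.support ⊆ {1,3}) :
    pWeight U = U 1 + 3 * U 3 := by
  rw [pWeight, Finsupp.sum_of_support_subset U hsupp _ (fun i _ => by simp)]
  rw [show ({1,3} : Finset ℕ) = insert 1 {3} from rfl, Finset.sum_insert (by decide),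
    Finset.sum_singleton]
  ring

lemma degree_13 (U : ℕ →₀ ℕ) (hsupp : U.support ⊆ {1,3}) :
    pDegree U = U 1 + U 3 := by
  rw [pDegree, Finsupp.sum_of_support_subset U hsupp _ (fun i _ => by simp)]
  rw [show ({1,3} : Finset ℕ) = insert 1 {3} from rfl, Finset.sum_insert (by decide),
    Finset.sum_singleton]

lemma gamma_13 (U : ℕ →₀ ℕ) (hsupp : U.support ⊆ {1,3}) :
    pGamma U = 2 ^ (U 1) * (U 1)! * (4 ^ (U 3) * (U 3)!) := by
  rw [pGamma, Finsupp.prod_of_support_subset U hsupp _ (fun i _ => by simp)]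
  rw [show ({1,3} : Finset ℕ) = insert 1 {3} from rfl, Finset.prod_insert (by decide),
    Finset.prod_singleton]

lemma eq_pair_13 (U : ℕ →₀ ℕ) (hsupp : U.support ⊆ {1,3}) :
    U = Finsupp.single 1 (U 1) + Finsupp.single 3 (U 3) := by
  ext j
  rw [Finsupp.add_apply, Finsupp.single_apply, Finsupp.single_apply]
  by_cases h1 : j = 1
  · subst h1; simp
  · by_cases h3 : j = 3
    · subst h3; simp
    · have hj : U j = 0 := by
        by_contra hne
        have : j ∈ U.support := Finsupp.mem_support_iff.2 hne
        have := hsupp this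
        simp only [Finset.mem_insert, Finset.mem_singleton] at this
        tauto
      simp [h1, h3, hj, if_neg (Ne.symm h1), if_neg (Ne.symm h3)]

lemma gamma_dvd (U : ℕ →₀ ℕ) (hU0 : U 0 = 0) (hodd : Odd (pWeight U)) (h3 : 3 ≤ pWeight U)
    (hexc : ¬(U.support ⊆ {1,3} ∧ U 3 ≤ 1)) :
    pGamma U ∣ ((pWeight U + pDegree U - 2)!) := by
  rw [← Nat.factorization_le_iff_dvd (pgamma_ne_zero U) (Nat.factorial_ne_zero _)]
  rw [Finsupp.le_def]
  intro q
  by_cases hpp : q.Prime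
  swap
  · simp [Nat.factorization_eq_zero_of_not_prime _ hpp]
  haveI : Fact q.Prime := ⟨hpp⟩
  rw [Nat.factorization_def _ hpp, Nat.factorization_def _ hpp]
  by_cases hbig : ∃ j ∈ U.support, q < j + 1 ∧ (¬(q = 2 ∧ j + 1 = 4) ∨ 3 ≤ U j)
  · obtain ⟨j', hj', hgt, hex⟩ := hbig
    exact route_pivot U j' hj' hgt hex
  · push_neg at hbig
    by_cases hq2 : q = 2
    · -- q = 2
      subst hq2
      have hsupp : U.support ⊆ {1,3} := by
        intro j hj
        have hjpos : 1 ≤ j := by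
          rcases Nat.eq_zero_or_pos j with h | h
          · exfalso
            have := Finsupp.mem_support_iff.1 hj
            rw [h] at this; exact this hU0
          · exact h
        rcases Nat.lt_or_ge 2 (j+1) with h | h
        · have hb := hbig j hj h
          have hj3 : j = 3 := by
            rcases hb with ⟨⟨_, h4⟩, _⟩
            omega
          simp [hj3]
        · have : j = 1 := by omega
          simp [this]
      have h32 : U 3 = 2 := by
        rcases Nat.lt_or_ge 1 (U 3) with h | h
        · by_cases h3m : (3:ℕ) ∈ U.support
          · have hb := hbig 3 h3m (by omega)
            omega
          · have : U 3 = 0 := Finsupp.notMem_support_iff.1 h3m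
            omega
        · exact absurd ⟨hsupp, h⟩ hexc
      -- route 3 : partition (2^a, 4, 4)
      set a := U 1 with ha
      have hW : pWeight U = a + 6 := by rw [weight_13 U hsupp, h32]
      have hD : pDegree U = a + 2 := by rw [degree_13 U hsupp, h32]
      have hG : pGamma U = 2^a * a ! * 32 := by
        rw [gamma_13 U hsupp, h32]
        norm_num
        rfl
      have haodd : a % 2 = 1 := by
        rcases hodd with ⟨k, hk⟩
        omega
      have hN2 : pWeight U + pDegree U - 2 = 2 * (a + 3) := by omega
      rw [hN2, hG]
      have hvG : padicValNat 2 (2^a * a ! * 32) = a + padicValNat 2 (a !) + 5 := by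
        rw [padicValNat.mul (by positivity) (by norm_num),
          padicValNat.mul (by positivity) (Nat.factorial_ne_zero _),
          padicValNat.prime_pow, show (32:ℕ) = 2^5 by norm_num, padicValNat.prime_pow]
      rw [hvG, padicValNat_factorial_mul]
      have f1 : (a+1)! = (a+1) * a ! := Nat.factorial_succ a
      have f2 : (a+2)! = (a+2) * (a+1)! := by
        rw [show a+2 = (a+1)+1 by omega]; exact Nat.factorial_succ _
      have f3 : (a+3)! = (a+3) * (a+2)! := by
        rw [show a+3 = (a+2)+1 by omega]; exact Nat.factorial_succ _
      have hfac : (a+3)! = (a+3) * ((a+2) * ((a+1) * a !)) := by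
        rw [f3, f2, f1]
      have hv3 : padicValNat 2 ((a+3)!) = padicValNat 2 (a+3) + (padicValNat 2 (a+2) +
          (padicValNat 2 (a+1) + padicValNat 2 (a !))) := by
        rw [hfac, padicValNat.mul (by omega) (by positivity),
          padicValNat.mul (by omega) (by positivity),
          padicValNat.mul (by omega) (Nat.factorial_ne_zero _)]
      have hd1 : 1 ≤ padicValNat 2 (a+1) :=
        one_le_padicValNat_of_dvd (by omega) (by omega)
      have hd3 : 1 ≤ padicValNat 2 (a+3) :=
        one_le_padicValNat_of_dvd (by omega) (by omega)
      omega
    · -- q odd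
      apply route_small hq2 U hU0 hodd
      intro j hj
      by_contra hgt
      push_neg at hgt
      exact hq2 (hbig j hj hgt).1.1


section Exceptional

lemma half_val (D M : ℕ) (hD : D ≠ 0) (hM : M ≠ 0) (hdvd : D ∣ M)
    (hv : padicValNat 2 M = padicValNat 2 D) :
    ∃ z : ℤ, (M : ℚ) / (2 * (D:ℚ)) - 1/2 = (z : ℚ) := by
  haveI : Fact (Nat.Prime 2) := ⟨Nat.prime_two⟩
  obtain ⟨A, hA⟩ := hdvd
  have hA0 : A ≠ 0 := by rintro rfl; rw [mul_zero] at hA; exact hM hA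
  have hvA : padicValNat 2 A = 0 := by
    have h1 := padicValNat.mul (p := 2) (a := D) (b := A) hD hA0
    rw [← hA] at h1
    omega
  have hodd2 : ¬ 2 ∣ A := by
    intro h
    have := one_le_padicValNat_of_dvd (p := 2) hA0 h
    omega
  obtain ⟨k, hk⟩ : ∃ k, A = 2*k+1 := ⟨A/2, by omega⟩
  refine ⟨k, ?_⟩
  have hD' : (D : ℚ) ≠ 0 := Nat.cast_ne_zero.2 hD
  rw [hA, hk]
  push_cast
  field_simp
  ring

lemma dvd_of_two_eq_odd_le (D M : ℕ) (hD : D ≠ 0) (hM : M ≠ 0)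
    (h2 : (Nat.factorization D) 2 ≤ (Nat.factorization M) 2)
    (hoddp : ∀ q, q.Prime → q ≠ 2 → (Nat.factorization D) q ≤ (Nat.factorization M) q) :
    D ∣ M := by
  rw [← Nat.factorization_le_iff_dvd hD hM, Finsupp.le_def]
  intro q
  by_cases hq : q.Prime
  · by_cases hq2 : q = 2
    · subst hq2; exact h2
    · exact hoddp q hq hq2
  · simp [Nat.factorization_eq_zero_of_not_prime _ hq]

lemma exc1 (n : ℕ) (h3 : 3 ≤ n) (hodd : Odd n) :
    ∃ z : ℤ, pTau (Finsupp.single 1 n) - 1/2 = (z : ℚ) := by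
  haveI : Fact (Nat.Prime 2) := ⟨Nat.prime_two⟩
  have hn2 : n % 2 = 1 := Nat.odd_iff.1 hodd
  have hW : pWeight (Finsupp.single 1 n) = n := by
    rw [pWeight, Finsupp.sum_single_index (by simp), one_mul]
  have hd : pDegree (Finsupp.single 1 n) = n := by
    rw [pDegree, Finsupp.sum_single_index rfl]
  have hg : pGamma (Finsupp.single 1 n) = 2^n * n ! := by
    rw [pGamma, Finsupp.prod_single_index (by simp)]
  set M := (2*(n-1))! with hMdef
  set D := 2^(n-1) * n ! with hDdef
  have hD0 : D ≠ 0 := by positivity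
  have hM0 : M ≠ 0 := Nat.factorial_ne_zero _
  have hnfac : n ! = n * (n-1)! := by
    have := Nat.factorial_succ (n-1)
    rwa [show n-1+1 = n by omega] at this
  have hvnf : padicValNat 2 (n !) = padicValNat 2 ((n-1)!) := by
    rw [hnfac, padicValNat.mul (by omega) (Nat.factorial_ne_zero _),
      padicValNat.eq_zero_of_not_dvd (by omega), zero_add]
  have hv : padicValNat 2 M = padicValNat 2 D := by
    rw [hMdef, hDdef, padicValNat_factorial_mul,
      padicValNat.mul (by positivity) (Nat.factorial_ne_zero _),
      padicValNat.prime_pow, hvnf]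
    omega
  have hdvd : D ∣ M := by
    apply dvd_of_two_eq_odd_le D M hD0 hM0
    · rw [Nat.factorization_def _ Nat.prime_two, Nat.factorization_def _ Nat.prime_two, hv]
    · intro q hq hq2
      haveI : Fact q.Prime := ⟨hq⟩
      rw [Nat.factorization_def _ hq, Nat.factorization_def _ hq]
      rw [hDdef, hMdef, padicValNat.mul (by positivity) (Nat.factorial_ne_zero _),
        padicValNat.pow _ _,
        padicValNat.eq_zero_of_not_dvd (by
          intro hdvd2
          have := Nat.le_of_dvd (by norm_num) hdvd2
          have := hq.two_le
          omega), mul_zero, zero_add]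
      exact vp_fact_le (by omega)
  obtain ⟨z, hz⟩ := half_val D M hD0 hM0 hdvd hv
  refine ⟨z, ?_⟩
  rw [← hz, pTau, hW, hd, hg]
  have hsign : ((-1 : ℚ)) ^ (n - 1) = 1 := by
    apply Even.neg_one_pow
    exact ⟨(n-1)/2, by omega⟩
  have harg : n + n - 2 = 2*(n-1) := by omega
  rw [harg, hsign, ← hMdef]
  have h2D : (2:ℕ)^n * n ! = 2 * D := by
    rw [hDdef, show (2:ℕ)^n = 2^(n-1)*2 by rw [← pow_succ, show n-1+1 = n by omega]]
    ring
  rw [h2D]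
  push_cast
  ring

lemma exc2 (n : ℕ) (h3 : 3 ≤ n) (hodd : Odd n) :
    ∃ z : ℤ, pTau (Finsupp.single 1 (n-3) + Finsupp.single 3 1) - 1/2 = (z : ℚ) := by
  haveI : Fact (Nat.Prime 2) := ⟨Nat.prime_two⟩
  have hn2 : n % 2 = 1 := Nat.odd_iff.1 hodd
  set W := Finsupp.single 1 (n-3) + Finsupp.single 3 1 with hWdef
  have hsupp : W.support ⊆ {1,3} := by
    apply subset_trans Finsupp.support_add
    apply Finset.union_subset
    · exact subset_trans Finsupp.support_single_subset (by intro x hx; simp at hx; simp [hx])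
    · exact subset_trans Finsupp.support_single_subset (by intro x hx; simp at hx; simp [hx])
  have hW1 : W 1 = n - 3 := by
    rw [hWdef, Finsupp.add_apply, Finsupp.single_apply, Finsupp.single_apply]
    norm_num
  have hW3 : W 3 = 1 := by
    rw [hWdef, Finsupp.add_apply, Finsupp.single_apply, Finsupp.single_apply]
    norm_num
  have hW : pWeight W = n := by
    rw [weight_13 W hsupp, hW1, hW3]
    omega
  have hd : pDegree W = n - 2 := by
    rw [degree_13 W hsupp, hW1, hW3]
    omega
  have hg : pGamma W = 2 * (2^(n-2) * (n-3)!) := by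
    rw [gamma_13 W hsupp, hW1, hW3]
    rw [show (4:ℕ)^1 * 1! = 2^2 by norm_num]
    rw [show (2:ℕ) * (2^(n-2) * (n-3)!) = 2^(n-1) * (n-3)! by
      rw [show n-1 = (n-2)+1 by omega, pow_succ]; ring]
    rw [show (2:ℕ)^(n-1) = 2^(n-3) * 2^2 by rw [← pow_add]; congr 1; omega]
    ring
  set M := (2*(n-2))! with hMdef
  set D := 2^(n-2) * (n-3)! with hDdef
  have hD0 : D ≠ 0 := by positivity
  have hM0 : M ≠ 0 := Nat.factorial_ne_zero _
  have hnfac : (n-2)! = (n-2) * (n-3)! := by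
    have := Nat.factorial_succ (n-3)
    rwa [show n-3+1 = n-2 by omega] at this
  have hvnf : padicValNat 2 ((n-2)!) = padicValNat 2 ((n-3)!) := by
    rw [hnfac, padicValNat.mul (by omega) (Nat.factorial_ne_zero _),
      padicValNat.eq_zero_of_not_dvd (by omega), zero_add]
  have hv : padicValNat 2 M = padicValNat 2 D := by
    rw [hMdef, hDdef, padicValNat_factorial_mul,
      padicValNat.mul (by positivity) (Nat.factorial_ne_zero _),
      padicValNat.prime_pow, hvnf]
    omega
  have hdvd : D ∣ M := by
    apply dvd_of_two_eq_odd_le D M hD0 hM0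
    · rw [Nat.factorization_def _ Nat.prime_two, Nat.factorization_def _ Nat.prime_two, hv]
    · intro q hq hq2
      haveI : Fact q.Prime := ⟨hq⟩
      rw [Nat.factorization_def _ hq, Nat.factorization_def _ hq]
      rw [hDdef, hMdef, padicValNat.mul (by positivity) (Nat.factorial_ne_zero _),
        padicValNat.pow _ _,
        padicValNat.eq_zero_of_not_dvd (by
          intro hdvd2
          have := Nat.le_of_dvd (by norm_num) hdvd2
          have := hq.two_le
          omega), mul_zero, zero_add]
      exact vp_fact_le (by omega)
  obtain ⟨z, hz⟩ := half_val D M hD0 hM0 hdvd hv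
  refine ⟨z, ?_⟩
  rw [← hz, pTau, hW, hd, hg]
  have hsign : ((-1 : ℚ)) ^ (n - 2 - 1) = 1 := by
    apply Even.neg_one_pow
    exact ⟨(n-3)/2, by omega⟩
  have harg : n + (n - 2) - 2 = 2*(n-2) := by omega
  rw [harg, hsign, ← hMdef]
  push_cast
  ring

end Exceptional


lemma S_finite (n : ℕ) : {U : ℕ →₀ ℕ | U 0 = 0 ∧ pWeight U = n}.Finite := by
  classical
  apply Set.Finite.subset (Set.finite_Icc (0 : ℕ →₀ ℕ)
    (Finsupp.indicator (Finset.range (n+1)) (fun _ _ => n)))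
  rintro U ⟨hU0, hWt⟩
  have hkey : ∀ j, j * U j ≤ n := by
    intro j
    by_cases hj : j ∈ U.support
    · rw [← hWt, pWeight, Finsupp.sum]
      exact Finset.single_le_sum (f := fun j => j * U j) (fun i _ => Nat.zero_le _) hj
    · rw [Finsupp.notMem_support_iff.1 hj, mul_zero]
      exact Nat.zero_le _
  rw [Set.mem_Icc]
  constructor
  · rw [Finsupp.le_def]
    intro j
    exact Nat.zero_le _
  · rw [Finsupp.le_def]
    intro j
    by_cases hjn : j ∈ Finset.range (n+1)
    · rw [Finsupp.indicator_of_mem hjn]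
      rcases Nat.eq_zero_or_pos j with h0 | h1
      · rw [h0, hU0]; exact Nat.zero_le _
      · have h2 : U j ≤ j * U j := Nat.le_mul_of_pos_left (U j) h1
        exact le_trans h2 (hkey j)
    · rcases Nat.eq_zero_or_pos (U j) with h0 | h1
      · rw [h0]; exact Nat.zero_le _
      · exfalso
        have hj2 : j ≤ j * U j := Nat.le_mul_of_pos_right j h1
        have := hkey j
        simp only [Finset.mem_range] at hjn
        omega

lemma Q_coeff (n : ℕ) (v : ℕ →₀ ℕ) :
    (Q n).coeff v = if v 0 = 0 ∧ pWeight v = n then pTau v else 0 := by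
  classical
  rw [Q, ← Set.Finite.coe_toFinset (S_finite n), finsum_mem_coe_finset,
    MvPolynomial.coeff_sum]
  simp only [MvPolynomial.coeff_monomial]
  rw [Finset.sum_ite_eq' ((S_finite n).toFinset) v pTau]
  simp only [Set.Finite.mem_toFinset, Set.mem_setOf_eq]

end VSAux

open VSAux

/-- The odd case of the universal von Staudt theorem: for odd n ≥ 3,
B̂_n/n ≡ (c_1^n + c_1^{n-3} c_3)/2 mod ℤ[c_1, c_2, ...]; that is, every coefficient of
Q_n - (1/2)c_1^n - (1/2)c_1^{n-3}c_3 is an integer. -/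
theorem universal_von_staudt_odd (n : ℕ) (h3 : 3 ≤ n) (hodd : Odd n) :
    ∀ v : ℕ →₀ ℕ, ∃ z : ℤ,
      (Q n - C (1 / 2 : ℚ) * (X 1 : MvPolynomial ℕ ℚ) ^ n
        - C (1 / 2 : ℚ) * (X 1 : MvPolynomial ℕ ℚ) ^ (n - 3) * X 3).coeff v = (z : ℚ) := by
  classical
  intro v
  set W1 : ℕ →₀ ℕ := Finsupp.single 1 n with hW1def
  set W2 : ℕ →₀ ℕ := Finsupp.single 1 (n-3) + Finsupp.single 3 1 with hW2def
  have hterm3 : C (1/2 : ℚ) * (X 1 : MvPolynomial ℕ ℚ) ^ (n-3) * X 3 =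
      monomial W2 (1/2 : ℚ) := by
    rw [C_mul_X_pow_eq_monomial]
    rw [show (X 3 : MvPolynomial ℕ ℚ) = X 3 ^ 1 by rw [pow_one],
      X_pow_eq_monomial, monomial_mul, mul_one]
  have hrw : (Q n - C (1 / 2 : ℚ) * (X 1 : MvPolynomial ℕ ℚ) ^ n
        - C (1 / 2 : ℚ) * (X 1 : MvPolynomial ℕ ℚ) ^ (n - 3) * X 3).coeff v
      = (Q n).coeff v - (if W1 = v then (1/2 : ℚ) else 0)
        - (if W2 = v then (1/2 : ℚ) else 0) := by
    rw [MvPolynomial.coeff_sub, MvPolynomial.coeff_sub, C_mul_X_pow_eq_monomial,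
      hterm3, MvPolynomial.coeff_monomial, MvPolynomial.coeff_monomial]
  rw [hrw]
  -- basic facts about W1 W2
  have hW1W : pWeight W1 = n := by
    rw [hW1def, pWeight, Finsupp.sum_single_index (by simp), one_mul]
  have hW10 : W1 0 = 0 := by
    rw [hW1def, Finsupp.single_apply]
    norm_num
  have hW2supp : W2.support ⊆ {1,3} := by
    apply subset_trans Finsupp.support_add
    apply Finset.union_subset
    · exact subset_trans Finsupp.support_single_subset (by intro x hx; simp at hx; simp [hx])
    · exact subset_trans Finsupp.support_single_subset (by intro x hx; simp at hx; simp [hx])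
  have hW21 : W2 1 = n - 3 := by
    rw [hW2def, Finsupp.add_apply, Finsupp.single_apply, Finsupp.single_apply]
    norm_num
  have hW23 : W2 3 = 1 := by
    rw [hW2def, Finsupp.add_apply, Finsupp.single_apply, Finsupp.single_apply]
    norm_num
  have hW2W : pWeight W2 = n := by
    rw [weight_13 W2 hW2supp, hW21, hW23]
    omega
  have hW20 : W2 0 = 0 := by
    rw [hW2def, Finsupp.add_apply, Finsupp.single_apply, Finsupp.single_apply]
    norm_num
  have hW1ne2 : W1 ≠ W2 := by
    intro h
    have := DFunLike.congr_fun h 3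
    rw [hW23] at this
    rw [hW1def, Finsupp.single_apply] at this
    norm_num at this
  by_cases hv1 : W1 = v
  · subst hv1
    rw [if_pos rfl, if_neg (Ne.symm hW1ne2), Q_coeff, if_pos ⟨hW10, hW1W⟩, sub_zero]
    exact exc1 n h3 hodd
  · by_cases hv2 : W2 = v
    · subst hv2
      rw [if_neg hv1, if_pos rfl, Q_coeff, if_pos ⟨hW20, hW2W⟩, sub_zero]
      exact exc2 n h3 hodd
    · rw [if_neg hv1, if_neg hv2, sub_zero, sub_zero, Q_coeff]
      by_cases hvS : v 0 = 0 ∧ pWeight v = n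
      · rw [if_pos hvS]
        obtain ⟨hv0, hvW⟩ := hvS
        have hexc : ¬(v.support ⊆ {1,3} ∧ v 3 ≤ 1) := by
          rintro ⟨hsupp, h31⟩
          have hpair := eq_pair_13 v hsupp
          rcases Nat.lt_or_ge (v 3) 1 with h30 | h31'
          · have h30' : v 3 = 0 := by omega
            apply hv1
            rw [hpair, h30', Finsupp.single_zero, add_zero, hW1def]
            congr 1
            rw [weight_13 v hsupp, h30'] at hvW
            omega
          · have h31'' : v 3 = 1 := by omega
            apply hv2
            rw [hpair, h31'', hW2def]
            congr 2
            rw [weight_13 v hsupp, h31''] at hvW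
            omega
        have hdvd := gamma_dvd v hv0 (hvW ▸ hodd) (hvW ▸ h3) hexc
        obtain ⟨k, hk⟩ := hdvd
        refine ⟨(-1)^(pDegree v - 1) * (k : ℤ), ?_⟩
        have hγ : ((pGamma v : ℚ)) ≠ 0 := Nat.cast_ne_zero.2 (pgamma_ne_zero v)
        rw [pTau, hk]
        push_cast
        field_simp
      · rw [if_neg hvS]
        exact ⟨0, by norm_num⟩

end
end
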